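/- arXiv:2309.16966 — 6 statements merged into one kernel-verified Lean document; each statement's English description precedes it below -/
import Mathlib

section
/- With the coefficients a_{r,s}, b_{r,s}, c_{r,s}, d_{r,s} defined as in the context, for every integer n ≥ 0 and all integers 0 ≤ j ≤ n−1 and 0 ≤ k ≤ n, the numbers a_{n,j} and d_{n,k} are rational, and the numbers b_{n,j} and c_{n,j} are rational multiples of √3. -/
open Finset

/-- Non-recursive part of `Rpoly`. -/
noncomputable def GR (k : ℕ) : Polynomial ℝ :=
  Polynomial.C ((1 : ℝ) / (2 * (k + 1))) *
    ∑ j ∈ (Finset.range (k + 2)).filter (fun j => Even j),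
      Polynomial.C ((-1 : ℝ) ^ (j / 2) * ((k + 1).choose j : ℝ) * ((2 : ℝ) ^ j + 1)) *
        Polynomial.X ^ (k + 1 - j)

noncomputable def GS (k : ℕ) : Polynomial ℝ :=
  Polynomial.C ((1 : ℝ) / (2 * (k + 1))) *
    ∑ j ∈ (Finset.range (k + 2)).filter (fun j => Odd j),
      Polynomial.C ((-1 : ℝ) ^ ((j + 1) / 2) * ((k + 1).choose j : ℝ) * ((2 : ℝ) ^ j - 1)) *
        Polynomial.X ^ (k + 1 - j)

noncomputable def GP (k : ℕ) : Polynomial ℝ :=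
  Polynomial.C ((1 : ℝ) / (2 * (k + 1))) *
    ∑ j ∈ (Finset.range (k + 2)).filter (fun j => Even j),
      Polynomial.C ((-1 : ℝ) ^ (j / 2) * ((k + 1).choose j : ℝ) * ((5 : ℝ) ^ j + 1)) *
        Polynomial.X ^ (k + 1 - j)

noncomputable def GQ (k : ℕ) : Polynomial ℝ :=
  Polynomial.C ((1 : ℝ) / (2 * (k + 1))) *
    ∑ j ∈ (Finset.range (k + 2)).filter (fun j => Odd j),
      Polynomial.C ((-1 : ℝ) ^ ((j - 1) / 2) * ((k + 1).choose j : ℝ) * ((5 : ℝ) ^ j - 1)) *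
        Polynomial.X ^ (k + 1 - j)

noncomputable def GY (k : ℕ) : Polynomial ℝ :=
  Polynomial.C (-((1 : ℝ) / (k + 1))) *
    (Polynomial.X ^ (k + 1) +
      ∑ j ∈ (Finset.range (k + 2)).filter (fun j => Even j),
        Polynomial.C ((-1 : ℝ) ^ (j / 2) * ((k + 1).choose j : ℝ) * ((3 : ℝ) ^ j)) *
          Polynomial.X ^ (k + 1 - j))

noncomputable def GZ (k : ℕ) : Polynomial ℝ :=
  Polynomial.C (-((2 : ℝ) / (k + 1))) *
    ∑ j ∈ (Finset.range (k + 2)).filter (fun j => Even j),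
      Polynomial.C ((-1 : ℝ) ^ (j / 2) * ((k + 1).choose j : ℝ) * ((3 : ℝ) ^ j)) *
        Polynomial.X ^ (k + 1 - j)

/-- The common recursion: `F k = (1/(k+1)) ∑_{3 ≤ j ≤ k+1, j odd}
(−1)^{(j+1)/2} C(k+1,j) m^{j−1} F_{k+1−j} + G k`. -/
noncomputable def recFam (m : ℝ) (G : ℕ → Polynomial ℝ) : ℕ → Polynomial ℝ := fun k =>
  Nat.strongRecOn k fun k ih =>
    Polynomial.C ((1 : ℝ) / (k + 1)) *
      (∑ j ∈ ((Finset.range (k + 2)).filter (fun j => Odd j ∧ 3 ≤ j)).attach,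
        Polynomial.C ((-1 : ℝ) ^ ((j.1 + 1) / 2) * ((k + 1).choose j.1 : ℝ) * m ^ (j.1 - 1)) *
          ih (k + 1 - j.1) (by
            have hj := j.2
            simp only [Finset.mem_filter, Finset.mem_range] at hj
            omega))
    + G k

noncomputable def Rpoly : ℕ → Polynomial ℝ := recFam 3 GR
noncomputable def Spoly : ℕ → Polynomial ℝ := recFam 3 GS
noncomputable def Ppoly : ℕ → Polynomial ℝ := recFam 6 GP
noncomputable def Qpoly : ℕ → Polynomial ℝ := recFam 6 GQ
noncomputable def Ypoly : ℕ → Polynomial ℝ := recFam 3 GY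
noncomputable def Zpoly : ℕ → Polynomial ℝ := recFam 6 GZ
/-- Coefficient `r_{k,j}`: for even `k`, `R_k(x) = Σ_j r_{k,j} x^{2j−1}`;
for odd `k`, `R_k(x) = Σ_j r_{k,j} x^{2j}`. -/
noncomputable def rr (k j : ℕ) : ℝ :=
  if Even k then (Rpoly k).coeff (2 * j - 1) else (Rpoly k).coeff (2 * j)

noncomputable def pp (k j : ℕ) : ℝ :=
  if Even k then (Ppoly k).coeff (2 * j - 1) else (Ppoly k).coeff (2 * j)

noncomputable def yy (k j : ℕ) : ℝ :=
  if Even k then (Ypoly k).coeff (2 * j - 1) else (Ypoly k).coeff (2 * j)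

noncomputable def zz (k j : ℕ) : ℝ :=
  if Even k then (Zpoly k).coeff (2 * j - 1) else (Zpoly k).coeff (2 * j)

/-- Coefficient `s_{k,j}`: for odd `k`, `S_k(x) = Σ_j s_{k,j} x^{2j−1}`;
for even `k`, `S_k(x) = Σ_j s_{k,j} x^{2j}`. -/
noncomputable def ss (k j : ℕ) : ℝ :=
  if Even k then (Spoly k).coeff (2 * j) else (Spoly k).coeff (2 * j - 1)

noncomputable def qq (k j : ℕ) : ℝ :=
  if Even k then (Qpoly k).coeff (2 * j) else (Qpoly k).coeff (2 * j - 1)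

/-- The quadruple `(a_{n,·}, b_{n,·}, c_{n,·}, d_{n,·})` defined by the mutual
recursions of the paper, starting from `d_{0,0} = 1`. -/
noncomputable def ABCD : ℕ → ((ℕ → ℝ) × (ℕ → ℝ) × (ℕ → ℝ) × (ℕ → ℝ))
  | 0 => (fun _ => 0, fun _ => 0, fun _ => 0, fun j => if j = 0 then 1 else 0)
  | (n + 1) =>
    let cn := (ABCD n).2.2.1
    let dn := (ABCD n).2.2.2
    let a : ℕ → ℝ := fun j =>
      (Real.sqrt 3)⁻¹ * ∑ l ∈ Finset.Icc (j + 1) n,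
          cn (l - 1) * ((2 : ℝ) ^ (2 * (l : ℤ) - 2 * ((j : ℤ) + 1) + 1) * ss (2 * l - 1) (j + 1)
            + qq (2 * l - 1) (j + 1))
      + ∑ l ∈ Finset.Icc j n,
          dn l * ((2 : ℝ) ^ (2 * (l : ℤ) - 2 * ((j : ℤ) + 1) + 2) * rr (2 * l) (j + 1)
            + pp (2 * l) (j + 1))
    let b : ℕ → ℝ := fun h =>
      if h = 0 then
        (1 / 3 : ℝ) * ∑ l ∈ Finset.Icc 1 n,
            cn (l - 1) * ((2 : ℝ) ^ (2 * l) * (2 * rr (2 * l - 1) 0 + yy (2 * l - 1) 0)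
              + 2 * pp (2 * l - 1) 0 + zz (2 * l - 1) 0)
        + 2 * (Real.sqrt 3)⁻¹ * ∑ l ∈ Finset.Icc 0 n,
            dn l * ((2 : ℝ) ^ (2 * l + 1) * ss (2 * l) 0 + qq (2 * l) 0)
      else
        ∑ l ∈ Finset.Icc h n,
            cn (l - 1) * ((2 : ℝ) ^ (2 * (l : ℤ) - 2 * (h : ℤ)) * rr (2 * l - 1) h
              + pp (2 * l - 1) h)
        + (Real.sqrt 3)⁻¹ * ∑ l ∈ Finset.Icc (h - 1) n,
            dn l * ((2 : ℝ) ^ (2 * (l : ℤ) - 2 * (h : ℤ) + 1) * ss (2 * l) h + qq (2 * l) h)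
    let c : ℕ → ℝ := fun j =>
      (Real.sqrt 3)⁻¹ * ∑ l ∈ Finset.Icc (j + 1) (n + 1),
          a (l - 1) * ((2 : ℝ) ^ (2 * (l : ℤ) - 2 * ((j : ℤ) + 1) + 1) * ss (2 * l - 1) (j + 1)
            + qq (2 * l - 1) (j + 1))
      + ∑ l ∈ Finset.Icc j n,
          b l * ((2 : ℝ) ^ (2 * (l : ℤ) - 2 * ((j : ℤ) + 1) + 2) * rr (2 * l) (j + 1)
            + pp (2 * l) (j + 1))
    let d : ℕ → ℝ := fun h =>
      if h = 0 then
        (1 / 3 : ℝ) * ∑ l ∈ Finset.Icc 1 (n + 1),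
            a (l - 1) * ((2 : ℝ) ^ (2 * l) * (2 * rr (2 * l - 1) 0 + yy (2 * l - 1) 0)
              + 2 * pp (2 * l - 1) 0 + zz (2 * l - 1) 0)
        + 2 * (Real.sqrt 3)⁻¹ * ∑ l ∈ Finset.Icc 0 n,
            b l * ((2 : ℝ) ^ (2 * l + 1) * ss (2 * l) 0 + qq (2 * l) 0)
      else
        ∑ l ∈ Finset.Icc h (n + 1),
            a (l - 1) * ((2 : ℝ) ^ (2 * (l : ℤ) - 2 * (h : ℤ)) * rr (2 * l - 1) h
              + pp (2 * l - 1) h)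
        + (Real.sqrt 3)⁻¹ * ∑ l ∈ Finset.Icc h n,
            b l * ((2 : ℝ) ^ (2 * (l : ℤ) - 2 * (h : ℤ) + 1) * ss (2 * l) h + qq (2 * l) h)
    (a, b, c, d)

/-- `a_{n,j}` -/
noncomputable def aC (n j : ℕ) : ℝ := (ABCD n).1 j
/-- `b_{n,j}` -/
noncomputable def bC (n j : ℕ) : ℝ := (ABCD n).2.1 j
/-- `c_{n,j}` -/
noncomputable def cC (n j : ℕ) : ℝ := (ABCD n).2.2.1 j
/-- `d_{n,j}` -/
noncomputable def dC (n j : ℕ) : ℝ := (ABCD n).2.2.2 j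

/-! ### Auxiliary machinery -/

/-- A real number is rational. -/
def IsRat (x : ℝ) : Prop := ∃ q : ℚ, x = (q : ℝ)

lemma IsRat.add {x y : ℝ} (hx : IsRat x) (hy : IsRat y) : IsRat (x + y) := by
  obtain ⟨a, rfl⟩ := hx; obtain ⟨b, rfl⟩ := hy
  exact ⟨a + b, by push_cast; ring⟩

lemma IsRat.mul {x y : ℝ} (hx : IsRat x) (hy : IsRat y) : IsRat (x * y) := by
  obtain ⟨a, rfl⟩ := hx; obtain ⟨b, rfl⟩ := hy
  exact ⟨a * b, by push_cast; ring⟩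

lemma isRat_sum {ι : Type*} {s : Finset ι} {f : ι → ℝ} (h : ∀ i ∈ s, IsRat (f i)) :
    IsRat (∑ i ∈ s, f i) := by
  classical
  induction s using Finset.cons_induction with
  | empty => exact ⟨0, by simp⟩
  | cons a s ha ih =>
    obtain ⟨qa, hqa⟩ := h a (Finset.mem_cons_self a s)
    obtain ⟨qs, hqs⟩ := ih fun i hi => h i (Finset.mem_cons.2 (Or.inr hi))
    exact ⟨qa + qs, by rw [Finset.sum_cons, hqa, hqs]; push_cast; ring⟩

lemma sqrt3_sum_mul {s : Finset ℕ} {f g : ℕ → ℝ}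
    (hf : ∀ l ∈ s, ∃ q : ℚ, f l = Real.sqrt 3 * (q : ℝ)) (hg : ∀ l ∈ s, IsRat (g l)) :
    ∃ q : ℚ, ∑ l ∈ s, f l * g l = Real.sqrt 3 * (q : ℝ) := by
  classical
  induction s using Finset.cons_induction with
  | empty => exact ⟨0, by simp⟩
  | cons a s ha ih =>
    obtain ⟨qa, hqa⟩ := hf a (Finset.mem_cons_self a s)
    obtain ⟨ga, hga⟩ := hg a (Finset.mem_cons_self a s)
    obtain ⟨qs, hqs⟩ := ih (fun i hi => hf i (Finset.mem_cons.2 (Or.inr hi)))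
      (fun i hi => hg i (Finset.mem_cons.2 (Or.inr hi)))
    exact ⟨qa * ga + qs, by rw [Finset.sum_cons, hqa, hga, hqs]; push_cast; ring⟩

lemma isRat_sum_mul {s : Finset ℕ} {f g : ℕ → ℝ}
    (hf : ∀ l ∈ s, IsRat (f l)) (hg : ∀ l ∈ s, IsRat (g l)) :
    IsRat (∑ l ∈ s, f l * g l) :=
  isRat_sum fun l hl => (hf l hl).mul (hg l hl)

lemma isRat_zpow2 (z : ℤ) : IsRat ((2 : ℝ) ^ z) :=
  ⟨(2 : ℚ) ^ z, by rw [Rat.cast_zpow]; norm_num⟩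

/-- Coefficients of `C c * ∑ C (a j) * X ^ (e j)` are rational if `c` and the `a j` are. -/
lemma ratCoeff_CmulSum {c : ℝ} {ι : Type*} {s : Finset ι} {a : ι → ℝ} {e : ι → ℕ}
    (hc : IsRat c) (ha : ∀ j ∈ s, IsRat (a j)) (n : ℕ) :
    IsRat ((Polynomial.C c * ∑ j ∈ s, Polynomial.C (a j) * Polynomial.X ^ (e j)).coeff n) := by
  rw [Polynomial.coeff_C_mul, Polynomial.finset_sum_coeff]
  refine hc.mul (isRat_sum fun j hj => ?_)
  rw [Polynomial.coeff_C_mul, Polynomial.coeff_X_pow]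
  refine (ha j hj).mul ?_
  split
  · exact ⟨1, by norm_num⟩
  · exact ⟨0, by norm_num⟩

lemma ratCoeff_GR (k n : ℕ) : IsRat ((GR k).coeff n) :=
  ratCoeff_CmulSum ⟨1 / (2 * (k + 1)), by push_cast; ring⟩
    (fun j _ => ⟨(-1) ^ (j / 2) * ((k + 1).choose j : ℚ) * ((2 : ℚ) ^ j + 1),
      by push_cast; ring⟩) n

lemma ratCoeff_GS (k n : ℕ) : IsRat ((GS k).coeff n) :=
  ratCoeff_CmulSum ⟨1 / (2 * (k + 1)), by push_cast; ring⟩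
    (fun j _ => ⟨(-1) ^ ((j + 1) / 2) * ((k + 1).choose j : ℚ) * ((2 : ℚ) ^ j - 1),
      by push_cast; ring⟩) n

lemma ratCoeff_GP (k n : ℕ) : IsRat ((GP k).coeff n) :=
  ratCoeff_CmulSum ⟨1 / (2 * (k + 1)), by push_cast; ring⟩
    (fun j _ => ⟨(-1) ^ (j / 2) * ((k + 1).choose j : ℚ) * ((5 : ℚ) ^ j + 1),
      by push_cast; ring⟩) n

lemma ratCoeff_GQ (k n : ℕ) : IsRat ((GQ k).coeff n) :=
  ratCoeff_CmulSum ⟨1 / (2 * (k + 1)), by push_cast; ring⟩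
    (fun j _ => ⟨(-1) ^ ((j - 1) / 2) * ((k + 1).choose j : ℚ) * ((5 : ℚ) ^ j - 1),
      by push_cast; ring⟩) n

lemma ratCoeff_GZ (k n : ℕ) : IsRat ((GZ k).coeff n) :=
  ratCoeff_CmulSum ⟨-(2 / (k + 1)), by push_cast; ring⟩
    (fun j _ => ⟨(-1) ^ (j / 2) * ((k + 1).choose j : ℚ) * (3 : ℚ) ^ j,
      by push_cast; ring⟩) n

lemma ratCoeff_GY (k n : ℕ) : IsRat ((GY k).coeff n) := by
  unfold GY
  rw [Polynomial.coeff_C_mul, Polynomial.coeff_add, Polynomial.finset_sum_coeff]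
  refine IsRat.mul ⟨-(1 / (k + 1)), by push_cast; ring⟩ (IsRat.add ?_ (isRat_sum fun j hj => ?_))
  · rw [Polynomial.coeff_X_pow]
    split
    · exact ⟨1, by norm_num⟩
    · exact ⟨0, by norm_num⟩
  · rw [Polynomial.coeff_C_mul, Polynomial.coeff_X_pow]
    refine IsRat.mul ⟨(-1) ^ (j / 2) * ((k + 1).choose j : ℚ) * (3 : ℚ) ^ j, by push_cast; ring⟩ ?_
    split
    · exact ⟨1, by norm_num⟩
    · exact ⟨0, by norm_num⟩

lemma recFam_eq (m : ℝ) (G : ℕ → Polynomial ℝ) (k : ℕ) :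
    recFam m G k =
      Polynomial.C ((1 : ℝ) / (k + 1)) *
        (∑ j ∈ ((Finset.range (k + 2)).filter (fun j => Odd j ∧ 3 ≤ j)).attach,
          Polynomial.C ((-1 : ℝ) ^ ((j.1 + 1) / 2) * ((k + 1).choose j.1 : ℝ) * m ^ (j.1 - 1)) *
            recFam m G (k + 1 - j.1))
      + G k := by
  conv_lhs => rw [recFam, Nat.strongRecOn_eq]
  rfl

lemma recFam_rat {m : ℝ} (hm : IsRat m) {G : ℕ → Polynomial ℝ}
    (hG : ∀ k n, IsRat ((G k).coeff n)) : ∀ k n, IsRat ((recFam m G k).coeff n) := by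
  intro k
  induction k using Nat.strongRecOn with
  | ind k ih =>
    intro n
    rw [recFam_eq]
    rw [Polynomial.coeff_add, Polynomial.coeff_C_mul, Polynomial.finset_sum_coeff]
    refine IsRat.add (IsRat.mul ⟨1 / (k + 1), by push_cast; ring⟩
      (isRat_sum fun j _ => ?_)) (hG k n)
    rw [Polynomial.coeff_C_mul]
    have hj := j.2
    simp only [Finset.mem_filter, Finset.mem_range] at hj
    obtain ⟨qm, hqm⟩ := hm
    refine IsRat.mul ⟨(-1) ^ ((j.1 + 1) / 2) * ((k + 1).choose j.1 : ℚ) * qm ^ (j.1 - 1), ?_⟩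
      (ih (k + 1 - j.1) (by omega) n)
    rw [hqm]; push_cast; ring

lemma isRat_rr (k j : ℕ) : IsRat (rr k j) := by
  unfold rr Rpoly
  split <;> exact recFam_rat ⟨3, by norm_num⟩ ratCoeff_GR k _

lemma isRat_ss (k j : ℕ) : IsRat (ss k j) := by
  unfold ss Spoly
  split <;> exact recFam_rat ⟨3, by norm_num⟩ ratCoeff_GS k _

lemma isRat_pp (k j : ℕ) : IsRat (pp k j) := by
  unfold pp Ppoly
  split <;> exact recFam_rat ⟨6, by norm_num⟩ ratCoeff_GP k _

lemma isRat_qq (k j : ℕ) : IsRat (qq k j) := by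
  unfold qq Qpoly
  split <;> exact recFam_rat ⟨6, by norm_num⟩ ratCoeff_GQ k _

lemma isRat_yy (k j : ℕ) : IsRat (yy k j) := by
  unfold yy Ypoly
  split <;> exact recFam_rat ⟨3, by norm_num⟩ ratCoeff_GY k _

lemma isRat_zz (k j : ℕ) : IsRat (zz k j) := by
  unfold zz Zpoly
  split <;> exact recFam_rat ⟨6, by norm_num⟩ ratCoeff_GZ k _

lemma isRat_zpow2_nat (l : ℕ) : IsRat ((2 : ℝ) ^ l) := ⟨2 ^ l, by push_cast; ring⟩

lemma sqrt3_sq : Real.sqrt 3 * Real.sqrt 3 = 3 :=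
  Real.mul_self_sqrt (by norm_num)

lemma sqrt3_ne : Real.sqrt 3 ≠ 0 := by
  have := sqrt3_sq
  intro h; rw [h] at this; norm_num at this

lemma sqrt3_inv : (Real.sqrt 3)⁻¹ = Real.sqrt 3 / 3 := by
  refine inv_eq_of_mul_eq_one_right ?_
  rw [← mul_div_assoc, sqrt3_sq]
  norm_num

lemma sqrt3_inv_mul (x : ℝ) : (Real.sqrt 3)⁻¹ * (Real.sqrt 3 * x) = x := by
  rw [← mul_assoc, inv_mul_cancel₀ sqrt3_ne, one_mul]

lemma sqrt3_two_inv_mul (x : ℝ) :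
    2 * (Real.sqrt 3)⁻¹ * (Real.sqrt 3 * x) = 2 * x := by
  rw [mul_assoc, sqrt3_inv_mul]

lemma aC_succ (n j : ℕ) :
    aC (n + 1) j =
      (Real.sqrt 3)⁻¹ * ∑ l ∈ Finset.Icc (j + 1) n,
          cC n (l - 1) * ((2 : ℝ) ^ (2 * (l : ℤ) - 2 * ((j : ℤ) + 1) + 1) * ss (2 * l - 1) (j + 1)
            + qq (2 * l - 1) (j + 1))
      + ∑ l ∈ Finset.Icc j n,
          dC n l * ((2 : ℝ) ^ (2 * (l : ℤ) - 2 * ((j : ℤ) + 1) + 2) * rr (2 * l) (j + 1)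
            + pp (2 * l) (j + 1)) := rfl

lemma bC_succ (n h : ℕ) :
    bC (n + 1) h =
      if h = 0 then
        (1 / 3 : ℝ) * ∑ l ∈ Finset.Icc 1 n,
            cC n (l - 1) * ((2 : ℝ) ^ (2 * l) * (2 * rr (2 * l - 1) 0 + yy (2 * l - 1) 0)
              + 2 * pp (2 * l - 1) 0 + zz (2 * l - 1) 0)
        + 2 * (Real.sqrt 3)⁻¹ * ∑ l ∈ Finset.Icc 0 n,
            dC n l * ((2 : ℝ) ^ (2 * l + 1) * ss (2 * l) 0 + qq (2 * l) 0)
      else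
        ∑ l ∈ Finset.Icc h n,
            cC n (l - 1) * ((2 : ℝ) ^ (2 * (l : ℤ) - 2 * (h : ℤ)) * rr (2 * l - 1) h
              + pp (2 * l - 1) h)
        + (Real.sqrt 3)⁻¹ * ∑ l ∈ Finset.Icc (h - 1) n,
            dC n l * ((2 : ℝ) ^ (2 * (l : ℤ) - 2 * (h : ℤ) + 1) * ss (2 * l) h + qq (2 * l) h) :=
  rfl

lemma cC_succ (n j : ℕ) :
    cC (n + 1) j =
      (Real.sqrt 3)⁻¹ * ∑ l ∈ Finset.Icc (j + 1) (n + 1),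
          aC (n + 1) (l - 1) *
            ((2 : ℝ) ^ (2 * (l : ℤ) - 2 * ((j : ℤ) + 1) + 1) * ss (2 * l - 1) (j + 1)
              + qq (2 * l - 1) (j + 1))
      + ∑ l ∈ Finset.Icc j n,
          bC (n + 1) l * ((2 : ℝ) ^ (2 * (l : ℤ) - 2 * ((j : ℤ) + 1) + 2) * rr (2 * l) (j + 1)
            + pp (2 * l) (j + 1)) := rfl

lemma dC_succ (n h : ℕ) :
    dC (n + 1) h =
      if h = 0 then
        (1 / 3 : ℝ) * ∑ l ∈ Finset.Icc 1 (n + 1),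
            aC (n + 1) (l - 1) * ((2 : ℝ) ^ (2 * l) * (2 * rr (2 * l - 1) 0 + yy (2 * l - 1) 0)
              + 2 * pp (2 * l - 1) 0 + zz (2 * l - 1) 0)
        + 2 * (Real.sqrt 3)⁻¹ * ∑ l ∈ Finset.Icc 0 n,
            bC (n + 1) l * ((2 : ℝ) ^ (2 * l + 1) * ss (2 * l) 0 + qq (2 * l) 0)
      else
        ∑ l ∈ Finset.Icc h (n + 1),
            aC (n + 1) (l - 1) * ((2 : ℝ) ^ (2 * (l : ℤ) - 2 * (h : ℤ)) * rr (2 * l - 1) h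
              + pp (2 * l - 1) h)
        + (Real.sqrt 3)⁻¹ * ∑ l ∈ Finset.Icc h n,
            bC (n + 1) l * ((2 : ℝ) ^ (2 * (l : ℤ) - 2 * (h : ℤ) + 1) * ss (2 * l) h
              + qq (2 * l) h) := rfl

/-- The coefficients `a_{n,j}` and `d_{n,k}` are rational, while `b_{n,j}` and
`c_{n,j}` are rational multiples of `√3`, for all `n ≥ 0`, `0 ≤ j ≤ n−1`, `0 ≤ k ≤ n`. -/
theorem rationality_of_coefficients (n : ℕ) :
    (∀ j, j < n → ∃ q : ℚ, aC n j = (q : ℝ)) ∧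
    (∀ k, k ≤ n → ∃ q : ℚ, dC n k = (q : ℝ)) ∧
    (∀ j, j < n → ∃ q : ℚ, bC n j = Real.sqrt 3 * (q : ℝ)) ∧
    (∀ j, j < n → ∃ q : ℚ, cC n j = Real.sqrt 3 * (q : ℝ)) := by
  have E1 : ∀ (z : ℤ) (k j : ℕ), IsRat ((2 : ℝ) ^ z * ss k j + qq k j) := fun z k j =>
    ((isRat_zpow2 z).mul (isRat_ss k j)).add (isRat_qq k j)
  have E2 : ∀ (z : ℤ) (k j : ℕ), IsRat ((2 : ℝ) ^ z * rr k j + pp k j) := fun z k j =>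
    ((isRat_zpow2 z).mul (isRat_rr k j)).add (isRat_pp k j)
  have E2' : ∀ (z : ℤ) (k j : ℕ), IsRat ((2 : ℝ) ^ z * rr k j + pp k j) := E2
  have E3 : ∀ (e k : ℕ), IsRat ((2 : ℝ) ^ e * (2 * rr k 0 + yy k 0) + 2 * pp k 0 + zz k 0) :=
    fun e k =>
      (((isRat_zpow2_nat e).mul ((IsRat.mul ⟨2, by norm_num⟩ (isRat_rr k 0)).add
        (isRat_yy k 0))).add (IsRat.mul ⟨2, by norm_num⟩ (isRat_pp k 0))).add (isRat_zz k 0)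
  have E4 : ∀ (e k : ℕ), IsRat ((2 : ℝ) ^ e * ss k 0 + qq k 0) := fun e k =>
    ((isRat_zpow2_nat e).mul (isRat_ss k 0)).add (isRat_qq k 0)
  induction n with
  | zero =>
    refine ⟨fun j hj => absurd hj (by omega), fun k hk => ?_,
      fun j hj => absurd hj (by omega), fun j hj => absurd hj (by omega)⟩
    interval_cases k
    exact ⟨1, by simp [dC, ABCD]⟩
  | succ n IH =>
    obtain ⟨Ha, Hd, Hb, Hc⟩ := IH
    have ha : ∀ j, j < n + 1 → ∃ q : ℚ, aC (n + 1) j = (q : ℝ) := by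
      intro j hj
      rw [aC_succ]
      obtain ⟨q1, hq1⟩ := sqrt3_sum_mul (s := Finset.Icc (j + 1) n)
        (f := fun l => cC n (l - 1))
        (g := fun l => (2 : ℝ) ^ (2 * (l : ℤ) - 2 * ((j : ℤ) + 1) + 1) * ss (2 * l - 1) (j + 1)
          + qq (2 * l - 1) (j + 1))
        (fun l hl => Hc (l - 1) (by have := Finset.mem_Icc.mp hl; omega))
        (fun l _ => E1 _ _ _)
      obtain ⟨q2, hq2⟩ := isRat_sum_mul (s := Finset.Icc j n)
        (f := fun l => dC n l)
        (g := fun l => (2 : ℝ) ^ (2 * (l : ℤ) - 2 * ((j : ℤ) + 1) + 2) * rr (2 * l) (j + 1)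
          + pp (2 * l) (j + 1))
        (fun l hl => Hd l (Finset.mem_Icc.mp hl).2)
        (fun l _ => E2 _ _ _)
      exact ⟨q1 + q2, by rw [hq1, hq2, sqrt3_inv_mul]; push_cast; ring⟩
    have hb : ∀ j, j < n + 1 → ∃ q : ℚ, bC (n + 1) j = Real.sqrt 3 * (q : ℝ) := by
      intro h _
      rw [bC_succ]
      by_cases h0 : h = 0
      · rw [if_pos h0]
        obtain ⟨q1, hq1⟩ := sqrt3_sum_mul (s := Finset.Icc 1 n)
          (f := fun l => cC n (l - 1))
          (g := fun l => (2 : ℝ) ^ (2 * l) * (2 * rr (2 * l - 1) 0 + yy (2 * l - 1) 0)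
            + 2 * pp (2 * l - 1) 0 + zz (2 * l - 1) 0)
          (fun l hl => Hc (l - 1) (by have := Finset.mem_Icc.mp hl; omega))
          (fun l _ => E3 _ _)
        obtain ⟨q2, hq2⟩ := isRat_sum_mul (s := Finset.Icc 0 n)
          (f := fun l => dC n l)
          (g := fun l => (2 : ℝ) ^ (2 * l + 1) * ss (2 * l) 0 + qq (2 * l) 0)
          (fun l hl => Hd l (Finset.mem_Icc.mp hl).2)
          (fun l _ => E4 _ _)
        exact ⟨q1 / 3 + 2 * q2 / 3, by rw [hq1, hq2, sqrt3_inv]; push_cast; ring⟩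
      · rw [if_neg h0]
        obtain ⟨q1, hq1⟩ := sqrt3_sum_mul (s := Finset.Icc h n)
          (f := fun l => cC n (l - 1))
          (g := fun l => (2 : ℝ) ^ (2 * (l : ℤ) - 2 * (h : ℤ)) * rr (2 * l - 1) h
            + pp (2 * l - 1) h)
          (fun l hl => Hc (l - 1) (by have := Finset.mem_Icc.mp hl; omega))
          (fun l _ => E2' _ _ _)
        obtain ⟨q2, hq2⟩ := isRat_sum_mul (s := Finset.Icc (h - 1) n)
          (f := fun l => dC n l)
          (g := fun l => (2 : ℝ) ^ (2 * (l : ℤ) - 2 * (h : ℤ) + 1) * ss (2 * l) h + qq (2 * l) h)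
          (fun l hl => Hd l (Finset.mem_Icc.mp hl).2)
          (fun l _ => E1 _ _ _)
        exact ⟨q1 + q2 / 3, by rw [hq1, hq2, sqrt3_inv]; push_cast; ring⟩
    have hc : ∀ j, j < n + 1 → ∃ q : ℚ, cC (n + 1) j = Real.sqrt 3 * (q : ℝ) := by
      intro j _
      rw [cC_succ]
      obtain ⟨q1, hq1⟩ := isRat_sum_mul (s := Finset.Icc (j + 1) (n + 1))
        (f := fun l => aC (n + 1) (l - 1))
        (g := fun l => (2 : ℝ) ^ (2 * (l : ℤ) - 2 * ((j : ℤ) + 1) + 1) * ss (2 * l - 1) (j + 1)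
          + qq (2 * l - 1) (j + 1))
        (fun l hl => ha (l - 1) (by have := Finset.mem_Icc.mp hl; omega))
        (fun l _ => E1 _ _ _)
      obtain ⟨q2, hq2⟩ := sqrt3_sum_mul (s := Finset.Icc j n)
        (f := fun l => bC (n + 1) l)
        (g := fun l => (2 : ℝ) ^ (2 * (l : ℤ) - 2 * ((j : ℤ) + 1) + 2) * rr (2 * l) (j + 1)
          + pp (2 * l) (j + 1))
        (fun l hl => hb l (by have := Finset.mem_Icc.mp hl; omega))
        (fun l _ => E2 _ _ _)
      exact ⟨q1 / 3 + q2, by rw [hq1, hq2, sqrt3_inv]; push_cast; ring⟩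
    have hd : ∀ k, k ≤ n + 1 → ∃ q : ℚ, dC (n + 1) k = (q : ℝ) := by
      intro h _
      rw [dC_succ]
      by_cases h0 : h = 0
      · rw [if_pos h0]
        obtain ⟨q1, hq1⟩ := isRat_sum_mul (s := Finset.Icc 1 (n + 1))
          (f := fun l => aC (n + 1) (l - 1))
          (g := fun l => (2 : ℝ) ^ (2 * l) * (2 * rr (2 * l - 1) 0 + yy (2 * l - 1) 0)
            + 2 * pp (2 * l - 1) 0 + zz (2 * l - 1) 0)
          (fun l hl => ha (l - 1) (by have := Finset.mem_Icc.mp hl; omega))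
          (fun l _ => E3 _ _)
        obtain ⟨q2, hq2⟩ := sqrt3_sum_mul (s := Finset.Icc 0 n)
          (f := fun l => bC (n + 1) l)
          (g := fun l => (2 : ℝ) ^ (2 * l + 1) * ss (2 * l) 0 + qq (2 * l) 0)
          (fun l hl => hb l (by have := Finset.mem_Icc.mp hl; omega))
          (fun l _ => E4 _ _)
        exact ⟨q1 / 3 + 2 * q2, by rw [hq1, hq2, sqrt3_two_inv_mul]; push_cast; ring⟩
      · rw [if_neg h0]
        obtain ⟨q1, hq1⟩ := isRat_sum_mul (s := Finset.Icc h (n + 1))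
          (f := fun l => aC (n + 1) (l - 1))
          (g := fun l => (2 : ℝ) ^ (2 * (l : ℤ) - 2 * (h : ℤ)) * rr (2 * l - 1) h
            + pp (2 * l - 1) h)
          (fun l hl => ha (l - 1) (by have := Finset.mem_Icc.mp hl; omega))
          (fun l _ => E2' _ _ _)
        obtain ⟨q2, hq2⟩ := sqrt3_sum_mul (s := Finset.Icc h n)
          (f := fun l => bC (n + 1) l)
          (g := fun l => (2 : ℝ) ^ (2 * (l : ℤ) - 2 * (h : ℤ) + 1) * ss (2 * l) h + qq (2 * l) h)
          (fun l hl => hb l (by have := Finset.mem_Icc.mp hl; omega))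
          (fun l _ => E1 _ _ _)
        exact ⟨q1 + q2, by rw [hq1, hq2, sqrt3_inv_mul]; push_cast; ring⟩
    exact ⟨ha, hd, hb, hc⟩
end

section
/- Let a, b be positive real numbers with a ≠ b, let β be a real number with −1 < β < 3 and β ∉ {0, 1, 2}, and set θ = 2π/3. Then ∫₀^∞ x^β / ((x² − a x + a²)(x² − b x + b²)) dx = (2π/(√3(a³−b³))) · [ (a^β − b^β) sin(θ(β−2)) − (b a^{β−1} − a b^{β−1}) sin(θβ) ] / sin(πβ). -/
open MeasureTheory Set Real


/-- Real Beta integral at `(s, 1-s)`. -/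
lemma beta_interval {s : ℝ} (hs0 : 0 < s) (hs1 : s < 1) :
    ∫ x in (0:ℝ)..1, x ^ (s - 1) * (1 - x) ^ (-s) = π / Real.sin (π * s) := by
  have hs0' : 0 < (s : ℂ).re := by simpa using hs0
  have hs1' : 0 < ((1 : ℂ) - s).re := by simp [Complex.sub_re]; linarith
  have hB : Complex.betaIntegral s (1 - s) = ↑π / Complex.sin (π * s) := by
    have := Complex.Gamma_mul_Gamma_eq_betaIntegral hs0' hs1'
    rw [show (s : ℂ) + (1 - s) = 1 by ring, Complex.Gamma_one, one_mul] at this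
    rw [← this, Complex.Gamma_mul_Gamma_one_sub]
  have hre : Complex.betaIntegral s (1 - s)
      = ((∫ x in (0:ℝ)..1, x ^ (s - 1) * (1 - x) ^ (-s) : ℝ) : ℂ) := by
    rw [Complex.betaIntegral, ← intervalIntegral.integral_ofReal]
    apply intervalIntegral.integral_congr
    intro x hx
    rw [uIcc_of_le zero_le_one] at hx
    have hx0 : (0:ℝ) ≤ x := hx.1
    have hx1 : (0:ℝ) ≤ 1 - x := by linarith [hx.2]
    simp only [Complex.ofReal_mul, Complex.ofReal_cpow hx0, Complex.ofReal_cpow hx1]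
    push_cast
    ring_nf
  have hsin : Complex.sin (π * s) = (Real.sin (π * s) : ℂ) := by
    rw [show ((π:ℂ) * (s:ℂ)) = ((π*s:ℝ):ℂ) by push_cast; ring, ← Complex.ofReal_sin]
  rw [hre, hsin] at hB
  have := hB
  rw [show (↑π / (Real.sin (π * s) : ℂ)) = ((π / Real.sin (π * s) : ℝ) : ℂ) by push_cast; ring] at this
  exact_mod_cast this

/-- Generic integrability of `x^γ / d x` on `(0,∞)`. -/
lemma intAux {γ p m : ℝ} (hγ : -1 < γ) (hgp : γ - p < -1) {d : ℝ → ℝ}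
    (hd : Continuous d) (hm : 0 < m) (hlow : ∀ x : ℝ, 0 < x → m ≤ d x)
    (hup : ∀ x : ℝ, 1 ≤ x → x ^ p ≤ d x) :
    IntegrableOn (fun x => x ^ γ / d x) (Ioi (0:ℝ)) := by
  have hmeas : ∀ (S : Set ℝ), S ⊆ Ioi 0 → MeasurableSet S →
      AEStronglyMeasurable (fun x : ℝ => x ^ γ / d x) (volume.restrict S) := by
    intro S hS hSm
    apply ContinuousOn.aestronglyMeasurable _ hSm
    apply ContinuousOn.div
    · exact fun x hx => (Real.continuousAt_rpow_const x γ (Or.inl (ne_of_gt (hS hx)))).continuousWithinAt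
    · exact hd.continuousOn
    · intro x hx; exact ne_of_gt (lt_of_lt_of_le hm (hlow x (hS hx)))
  have h1 : IntegrableOn (fun x => x ^ γ / d x) (Ioc (0:ℝ) 1) := by
    have hbase : IntegrableOn (fun x : ℝ => x ^ γ * m⁻¹) (Ioc (0:ℝ) 1) := by
      apply Integrable.mul_const
      have := (intervalIntegral.intervalIntegrable_rpow' (a := (0:ℝ)) (b := (1:ℝ)) hγ)
      rw [intervalIntegrable_iff_integrableOn_Ioc_of_le zero_le_one] at this
      exact this
    apply Integrable.mono' hbase (hmeas _ Ioc_subset_Ioi_self measurableSet_Ioc)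
    filter_upwards [ae_restrict_mem measurableSet_Ioc] with x hx
    have hx0 : 0 < x := hx.1
    have hdx : m ≤ d x := hlow x hx0
    rw [Real.norm_eq_abs, abs_of_nonneg (div_nonneg (Real.rpow_nonneg hx0.le _) (le_trans hm.le hdx))]
    rw [div_eq_mul_inv]
    exact mul_le_mul_of_nonneg_left (inv_anti₀ hm hdx) (Real.rpow_nonneg hx0.le _)
  have h2 : IntegrableOn (fun x => x ^ γ / d x) (Ioi (1:ℝ)) := by
    have hbase : IntegrableOn (fun x : ℝ => x ^ (γ - p)) (Ioi (1:ℝ)) :=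
      integrableOn_Ioi_rpow_of_lt hgp one_pos
    apply Integrable.mono' hbase (hmeas _ (fun x hx => mem_Ioi.mpr (lt_trans one_pos (mem_Ioi.mp hx))) measurableSet_Ioi)
    filter_upwards [ae_restrict_mem measurableSet_Ioi] with x hx
    have hx1 : (1:ℝ) ≤ x := le_of_lt hx
    have hx0 : 0 < x := lt_of_lt_of_le one_pos hx1
    have hdx : x ^ p ≤ d x := hup x hx1
    have hxp : 0 < x ^ p := Real.rpow_pos_of_pos hx0 _
    rw [Real.norm_eq_abs, abs_of_nonneg (div_nonneg (Real.rpow_nonneg hx0.le _) (le_trans hxp.le hdx))]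
    rw [Real.rpow_sub hx0, div_eq_mul_inv, div_eq_mul_inv]
    exact mul_le_mul_of_nonneg_left (inv_anti₀ hxp hdx) (Real.rpow_nonneg hx0.le _)
  have := h1.union h2
  rwa [Ioc_union_Ioi_eq_Ioi zero_le_one] at this

/-- The Mellin-type integral `∫₀^∞ t^(s-1)/(1+t) dt = π / sin (π s)` for `0 < s < 1`. -/
lemma mellin_one_add {s : ℝ} (hs0 : 0 < s) (hs1 : s < 1) :
    ∫ t in Ioi (0:ℝ), t ^ (s - 1) / (1 + t) = π / Real.sin (π * s) := by
  have himg : (fun x : ℝ => x / (1 - x)) '' Ioo 0 1 = Ioi (0:ℝ) := by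
    ext t
    constructor
    · rintro ⟨x, hx, rfl⟩
      exact div_pos hx.1 (by linarith [hx.2])
    · intro ht
      refine ⟨t / (1 + t), ⟨div_pos ht (by linarith [mem_Ioi.mp ht]), ?_⟩, ?_⟩
      · rw [div_lt_one (by linarith [mem_Ioi.mp ht])]; linarith [mem_Ioi.mp ht]
      · have h1t : (0:ℝ) < 1 + t := by linarith [mem_Ioi.mp ht]
        field_simp
        ring
  have hderiv : ∀ x ∈ Ioo (0:ℝ) 1, HasDerivWithinAt (fun x : ℝ => x / (1 - x))
      (((1 - x)^2)⁻¹) (Ioo 0 1) x := by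
    intro x hx
    have hne : (1:ℝ) - x ≠ 0 := by intro h; nlinarith [hx.2]
    have : HasDerivAt (fun x : ℝ => x / (1 - x))
        ((1 * (1 - x) - x * (-1)) / (1 - x)^2) x :=
      (hasDerivAt_id x).div ((hasDerivAt_id x).const_sub 1) hne
    have h2 : (1 * (1 - x) - x * (-1)) / (1 - x)^2 = ((1 - x)^2)⁻¹ := by
      field_simp
      ring
    rw [h2] at this
    exact this.hasDerivWithinAt
  have hinj : InjOn (fun x : ℝ => x / (1 - x)) (Ioo 0 1) := by
    intro x hx y hy hxy
    have hnx : (1:ℝ) - x ≠ 0 := by intro h; nlinarith [hx.2]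
    have hny : (1:ℝ) - y ≠ 0 := by intro h; nlinarith [hy.2]
    field_simp at hxy
    linarith
  have := integral_image_eq_integral_abs_deriv_smul measurableSet_Ioo hderiv hinj
    (fun t : ℝ => t ^ (s - 1) / (1 + t))
  rw [himg] at this
  rw [this]
  have heq : ∀ x ∈ Ioo (0:ℝ) 1,
      |(((1:ℝ) - x)^2)⁻¹| • ((x / (1 - x)) ^ (s - 1) / (1 + x / (1 - x)))
        = x ^ (s - 1) * (1 - x) ^ (-s) := by
    intro x hx
    have hx0 : 0 < x := hx.1
    have hx1 : 0 < 1 - x := by linarith [hx.2]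
    have h1 : (1:ℝ) + x / (1 - x) = 1 / (1 - x) := by field_simp; ring
    rw [smul_eq_mul, h1, abs_of_pos (by positivity), Real.div_rpow hx0.le hx1.le,
      Real.rpow_sub hx1, Real.rpow_one]
    rw [Real.rpow_neg hx1.le]
    have hxs : (0:ℝ) < (1-x) ^ s := Real.rpow_pos_of_pos hx1 s
    field_simp
  rw [setIntegral_congr_fun measurableSet_Ioo heq, ← beta_interval hs0 hs1,
    intervalIntegral.integral_of_le zero_le_one, integral_Ioc_eq_integral_Ioo]

lemma cube_integrable {c γ : ℝ} (hc : 0 < c) (hγ₁ : -1 < γ) (hγ₂ : γ < 2) :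
    IntegrableOn (fun x => x ^ γ / (x ^ 3 + c ^ 3)) (Ioi (0:ℝ)) := by
  apply intAux (p := (3:ℝ)) (m := c ^ 3) hγ₁ (by linarith)
    (by continuity) (by positivity)
  · intro x hx; nlinarith [pow_pos hx 3]
  · intro x hx
    have hx0 : (0:ℝ) < x := lt_of_lt_of_le one_pos hx
    rw [show (3:ℝ) = ((3:ℕ):ℝ) by norm_num, Real.rpow_natCast]
    nlinarith [pow_pos hc 3]

lemma cube_eval {c γ : ℝ} (hc : 0 < c) (hγ₁ : -1 < γ) (hγ₂ : γ < 2) :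
    ∫ x in Ioi (0:ℝ), x ^ γ / (x ^ 3 + c ^ 3)
      = c ^ (γ - 2) * π / (3 * Real.sin (π * ((γ + 1) / 3))) := by
  set s : ℝ := (γ + 1) / 3 with hs
  have hs0 : 0 < s := by rw [hs]; linarith
  have hs1 : s < 1 := by rw [hs]; linarith
  have himg : (fun u : ℝ => c * u ^ ((1:ℝ)/3)) '' Ioi 0 = Ioi (0:ℝ) := by
    ext t
    constructor
    · rintro ⟨u, hu, rfl⟩
      exact mul_pos hc (Real.rpow_pos_of_pos hu _)
    · intro ht
      have ht' : (0:ℝ) < t := ht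
      refine ⟨(t / c) ^ (3:ℝ), Real.rpow_pos_of_pos (div_pos ht' hc) _, ?_⟩
      show c * ((t / c) ^ (3:ℝ)) ^ ((1:ℝ)/3) = t
      rw [← Real.rpow_mul (div_pos ht' hc).le]
      norm_num
      field_simp
  have hderiv : ∀ u ∈ Ioi (0:ℝ), HasDerivWithinAt (fun u : ℝ => c * u ^ ((1:ℝ)/3))
      (c * (((1:ℝ)/3) * u ^ ((1:ℝ)/3 - 1))) (Ioi 0) u := by
    intro u hu
    exact ((Real.hasDerivAt_rpow_const (p := (1:ℝ)/3) (Or.inl (ne_of_gt hu))).const_mul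
      c).hasDerivWithinAt
  have hinj : InjOn (fun u : ℝ => c * u ^ ((1:ℝ)/3)) (Ioi 0) := by
    intro u hu v hv huv
    have h1 : u ^ ((1:ℝ)/3) = v ^ ((1:ℝ)/3) := mul_left_cancel₀ (ne_of_gt hc) huv
    have h2 : u ^ ((1:ℝ)/3 * 3) = v ^ ((1:ℝ)/3 * 3) := by
      rw [Real.rpow_mul (le_of_lt hu), Real.rpow_mul (le_of_lt hv), h1]
    rwa [show (1:ℝ)/3 * 3 = 1 by norm_num, Real.rpow_one, Real.rpow_one] at h2
  have key := integral_image_eq_integral_abs_deriv_smul measurableSet_Ioi hderiv hinj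
    (fun x : ℝ => x ^ γ / (x ^ 3 + c ^ 3))
  rw [himg] at key
  rw [key]
  have heq : ∀ u ∈ Ioi (0:ℝ),
      |c * (((1:ℝ)/3) * u ^ ((1:ℝ)/3 - 1))| •
        ((c * u ^ ((1:ℝ)/3)) ^ γ / ((c * u ^ ((1:ℝ)/3)) ^ 3 + c ^ 3))
        = (c ^ (γ - 2) / 3) * (u ^ (s - 1) / (1 + u)) := by
    intro u hu
    have hu0 : (0:ℝ) < u := hu
    have hcu : (0:ℝ) < c * u ^ ((1:ℝ)/3) := mul_pos hc (Real.rpow_pos_of_pos hu0 _)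
    have hcube : (c * u ^ ((1:ℝ)/3)) ^ 3 = c ^ 3 * u := by
      rw [mul_pow, ← Real.rpow_natCast (u ^ ((1:ℝ)/3)) 3, ← Real.rpow_mul hu0.le]
      norm_num
    rw [smul_eq_mul, hcube, abs_of_pos (by positivity),
      Real.mul_rpow hc.le (Real.rpow_pos_of_pos hu0 _).le,
      ← Real.rpow_mul hu0.le]
    have h1u : (0:ℝ) < 1 + u := by linarith
    have hexp : u ^ ((1:ℝ)/3 * γ) * u ^ ((1:ℝ)/3 - 1) = u ^ (s - 1) := by
      rw [← Real.rpow_add hu0, hs]; ring_nf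
    have hden : c ^ 3 * u + c ^ 3 = c ^ 3 * (1 + u) := by ring
    rw [hden]
    have hc3 : (0:ℝ) < c ^ 3 := pow_pos hc 3
    have hc2 : c ^ (γ - 2) * c ^ 3 = c ^ γ * c := by
      rw [← Real.rpow_natCast c 3, ← Real.rpow_add hc,
        show γ - 2 + ((3:ℕ):ℝ) = γ + 1 by push_cast; ring, Real.rpow_add hc, Real.rpow_one]
    generalize hA : u ^ ((1:ℝ)/3 - 1) = A at *
    generalize hB : u ^ ((1:ℝ)/3 * γ) = B at *
    generalize hC : u ^ (s - 1) = C at *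
    generalize hD : c ^ γ = D at *
    generalize hE : c ^ (γ - 2) = E at *
    field_simp
    have hc2' : E * c ^ 2 = D := mul_right_cancel₀ (ne_of_gt hc) (by linear_combination hc2)
    linear_combination D * hexp - C * hc2'
  rw [setIntegral_congr_fun measurableSet_Ioi heq, integral_const_mul,
    mellin_one_add hs0 hs1]
  ring

lemma double_integrable {a b γ : ℝ} (ha : 0 < a) (hb : 0 < b) (hγ₁ : -1 < γ) (hγ₂ : γ < 5) :
    IntegrableOn (fun x => x ^ γ / ((x ^ 3 + a ^ 3) * (x ^ 3 + b ^ 3))) (Ioi (0:ℝ)) := by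
  apply intAux (p := (6:ℝ)) (m := a ^ 3 * b ^ 3) hγ₁ (by linarith)
    (by continuity) (by positivity)
  · intro x hx
    have h1 : (0:ℝ) < x ^ 3 := pow_pos hx 3
    nlinarith [pow_pos ha 3, pow_pos hb 3]
  · intro x hx
    have hx0 : (0:ℝ) < x := lt_of_lt_of_le one_pos hx
    rw [show (6:ℝ) = ((6:ℕ):ℝ) by norm_num, Real.rpow_natCast]
    have h1 : (0:ℝ) < x ^ 3 := pow_pos hx0 3
    nlinarith [pow_pos ha 3, pow_pos hb 3]

lemma rpow_shift {c : ℝ} (hc : 0 < c) (δ : ℝ) : c ^ δ * c ^ 3 = c ^ (δ + 3) := by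
  rw [← Real.rpow_natCast c 3, ← Real.rpow_add hc]
  norm_num

lemma G_eval {a b γ : ℝ} (ha : 0 < a) (hb : 0 < b) (hab : a ≠ b)
    (hγ₁ : -1 < γ) (hγ₂ : γ < 5) (hγ2 : γ ≠ 2) :
    ∫ x in Ioi (0:ℝ), x ^ γ / ((x ^ 3 + a ^ 3) * (x ^ 3 + b ^ 3))
      = (a ^ (γ - 2) - b ^ (γ - 2)) / (b ^ 3 - a ^ 3) *
          (π / (3 * Real.sin (π * ((γ + 1) / 3)))) := by
  have hab3 : b ^ 3 - a ^ 3 ≠ 0 := by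
    intro h
    have h3 : a ^ 3 = b ^ 3 := by linarith
    rcases lt_trichotomy a b with h' | h' | h'
    · exact absurd h3 (ne_of_lt (pow_lt_pow_left₀ h' ha.le (by norm_num)))
    · exact hab h'
    · exact absurd h3.symm (ne_of_lt (pow_lt_pow_left₀ h' hb.le (by norm_num)))
  rcases lt_or_gt_of_ne hγ2 with hlt | hgt
  · -- case γ < 2 : direct partial fractions
    have heq : ∀ x ∈ Ioi (0:ℝ), x ^ γ / ((x ^ 3 + a ^ 3) * (x ^ 3 + b ^ 3))
        = (b ^ 3 - a ^ 3)⁻¹ * (x ^ γ / (x ^ 3 + a ^ 3) - x ^ γ / (x ^ 3 + b ^ 3)) := by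
      intro x hx
      have hx0 : (0:ℝ) < x := hx
      have hxa : (0:ℝ) < x ^ 3 + a ^ 3 := by positivity
      have hxb : (0:ℝ) < x ^ 3 + b ^ 3 := by positivity
      field_simp
      ring
    rw [setIntegral_congr_fun measurableSet_Ioi heq, integral_const_mul,
      integral_sub (cube_integrable ha hγ₁ hlt) (cube_integrable hb hγ₁ hlt),
      cube_eval ha hγ₁ hlt, cube_eval hb hγ₁ hlt]
    ring
  · -- case γ > 2 : reduce exponent by 3
    have hγ₁' : -1 < γ - 3 := by linarith
    have hγ₂' : γ - 3 < 2 := by linarith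
    have heq : ∀ x ∈ Ioi (0:ℝ), x ^ γ / ((x ^ 3 + a ^ 3) * (x ^ 3 + b ^ 3))
        = (b ^ 3 - a ^ 3)⁻¹ * (b ^ 3 * (x ^ (γ - 3) / (x ^ 3 + b ^ 3))
            - a ^ 3 * (x ^ (γ - 3) / (x ^ 3 + a ^ 3))) := by
      intro x hx
      have hx0 : (0:ℝ) < x := hx
      have hxa : (0:ℝ) < x ^ 3 + a ^ 3 := by positivity
      have hxb : (0:ℝ) < x ^ 3 + b ^ 3 := by positivity
      have hxg : x ^ (γ - 3) * x ^ 3 = x ^ γ := by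
        rw [← Real.rpow_natCast x 3, ← Real.rpow_add hx0]
        norm_num
      rw [← hxg]
      field_simp
      ring
    rw [setIntegral_congr_fun measurableSet_Ioi heq, integral_const_mul,
      integral_sub ((cube_integrable hb hγ₁' hγ₂').const_mul _)
        ((cube_integrable ha hγ₁' hγ₂').const_mul _),
      integral_const_mul, integral_const_mul,
      cube_eval ha hγ₁' hγ₂', cube_eval hb hγ₁' hγ₂']
    have hsin : Real.sin (π * ((γ - 3 + 1) / 3)) = - Real.sin (π * ((γ + 1) / 3)) := by
      rw [show π * ((γ - 3 + 1) / 3) = π * ((γ + 1) / 3) - π by ring, Real.sin_sub_pi]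
    rw [hsin]
    have hA : a ^ (γ - 3 - 2) * a ^ 3 = a ^ (γ - 2) := by
      rw [rpow_shift ha]; congr 1; ring
    have hB : b ^ (γ - 3 - 2) * b ^ 3 = b ^ (γ - 2) := by
      rw [rpow_shift hb]; congr 1; ring
    set S := Real.sin (π * ((γ + 1) / 3))
    rcases eq_or_ne S 0 with hS | hS
    · rw [hS]; simp
    · field_simp
      rw [← hA, ← hB]; ring

set_option maxHeartbeats 2000000 in
/-- Evaluation of `I₂(β) = ∫₀^∞ x^β /((x²−ax+a²)(x²−bx+b²)) dx` for `−1 < β < 3`,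
`β ∉ {0,1,2}`, with `θ = 2π/3`. -/
theorem I2_eval (a b : ℝ) (ha : 0 < a) (hb : 0 < b) (hab : a ≠ b)
    (β : ℝ) (hβ₁ : -1 < β) (hβ₂ : β < 3) (h0 : β ≠ 0) (h1 : β ≠ 1) (h2 : β ≠ 2) :
    ∫ x in Set.Ioi (0 : ℝ),
        x ^ β / ((x ^ 2 - a * x + a ^ 2) * (x ^ 2 - b * x + b ^ 2)) =
      2 * Real.pi / (Real.sqrt 3 * (a ^ 3 - b ^ 3)) *
        (((a ^ β - b ^ β) * Real.sin (2 * Real.pi / 3 * (β - 2))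
            - (b * a ^ (β - 1) - a * b ^ (β - 1)) * Real.sin (2 * Real.pi / 3 * β)) /
          Real.sin (Real.pi * β)) := by
  have heq : ∀ x ∈ Ioi (0:ℝ),
      x ^ β / ((x ^ 2 - a * x + a ^ 2) * (x ^ 2 - b * x + b ^ 2))
        = x ^ (β + 2) / ((x ^ 3 + a ^ 3) * (x ^ 3 + b ^ 3))
          + ((a + b) * (x ^ (β + 1) / ((x ^ 3 + a ^ 3) * (x ^ 3 + b ^ 3)))
            + a * b * (x ^ β / ((x ^ 3 + a ^ 3) * (x ^ 3 + b ^ 3)))) := by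
    intro x hx
    have hx0 : (0:ℝ) < x := hx
    have hqa : (0:ℝ) < x ^ 2 - a * x + a ^ 2 := by nlinarith [sq_nonneg (x - a), sq_nonneg x, sq_nonneg a]
    have hqb : (0:ℝ) < x ^ 2 - b * x + b ^ 2 := by nlinarith [sq_nonneg (x - b), sq_nonneg x, sq_nonneg b]
    have hca : (0:ℝ) < x ^ 3 + a ^ 3 := by positivity
    have hcb : (0:ℝ) < x ^ 3 + b ^ 3 := by positivity
    have e2 : x ^ (β + 2) = x ^ β * x ^ 2 := by
      rw [← Real.rpow_natCast x 2, ← Real.rpow_add hx0]; norm_num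
    have e1 : x ^ (β + 1) = x ^ β * x := by
      rw [Real.rpow_add hx0, Real.rpow_one]
    rw [e2, e1]
    have hxa : (0:ℝ) < x + a := by linarith
    have hxb : (0:ℝ) < x + b := by linarith
    rw [show (x ^ 3 + a ^ 3) * (x ^ 3 + b ^ 3) = ((x ^ 2 - a * x + a ^ 2) * (x ^ 2 - b * x + b ^ 2)) * ((x + a) * (x + b)) by ring]
    field_simp
    ring
  rw [setIntegral_congr_fun measurableSet_Ioi heq]
  have I1 := double_integrable ha hb (by linarith : (-1:ℝ) < β + 2) (by linarith)
  have I2 := double_integrable ha hb (by linarith : (-1:ℝ) < β + 1) (by linarith)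
  have I3 := double_integrable ha hb hβ₁ (by linarith)
  have J23 : IntegrableOn (fun x => (a + b) * (x ^ (β + 1) / ((x ^ 3 + a ^ 3) * (x ^ 3 + b ^ 3)))
      + a * b * (x ^ β / ((x ^ 3 + a ^ 3) * (x ^ 3 + b ^ 3)))) (Ioi (0:ℝ)) :=
    (I2.const_mul _).add (I3.const_mul _)
  rw [integral_add I1 J23,
    integral_add (I2.const_mul (a + b)) (I3.const_mul (a * b)), integral_const_mul, integral_const_mul,
    G_eval ha hb hab (by linarith) (by linarith) (by intro h; apply h0; linarith),
    G_eval ha hb hab (by linarith) (by linarith) (by intro h; apply h1; linarith),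
    G_eval ha hb hab hβ₁ (by linarith) h2]
  have hb3a3 : b ^ 3 - a ^ 3 ≠ 0 := by
    intro h
    have h3 : a ^ 3 = b ^ 3 := by linarith
    rcases lt_trichotomy a b with h' | h' | h'
    · exact absurd h3 (ne_of_lt (pow_lt_pow_left₀ h' ha.le (by norm_num)))
    · exact hab h'
    · exact absurd h3.symm (ne_of_lt (pow_lt_pow_left₀ h' hb.le (by norm_num)))
  have ha3b3 : a ^ 3 - b ^ 3 ≠ 0 := fun h => hb3a3 (by linarith)
  have hsin_ne : ∀ t : ℝ, -1 < t → t < 3 → t ≠ 0 → t ≠ 1 → t ≠ 2 →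
      Real.sin (π * t) ≠ 0 := by
    intro t ht1 ht3 ht0 htt1 htt2 h
    rw [Real.sin_eq_zero_iff] at h
    obtain ⟨n, hn⟩ := h
    have hnt : (n : ℝ) = t := mul_right_cancel₀ Real.pi_ne_zero (by linarith [hn])
    have hn1 : (-1 : ℝ) < (n:ℝ) := by rw [hnt]; exact ht1
    have hn3 : ((n:ℝ) : ℝ) < 3 := by rw [hnt]; exact ht3
    have hb1 : (-1 : ℤ) < n := by exact_mod_cast hn1
    have hb3 : n < (3 : ℤ) := by exact_mod_cast hn3
    interval_cases n
    · exact ht0 (by simpa using hnt.symm)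
    · exact htt1 (by simpa using hnt.symm)
    · exact htt2 (by simpa using hnt.symm)
  set s := Real.sin (π * (β / 3)) with hs_def
  set cc := Real.cos (π * (β / 3)) with hcc_def
  set r := Real.sqrt 3 with hr_def
  have hr : r ^ 2 = 3 := Real.sq_sqrt (by norm_num)
  have hr0 : r ≠ 0 := ne_of_gt (Real.sqrt_pos.mpr (by norm_num))
  have hsc : s ^ 2 + cc ^ 2 = 1 := Real.sin_sq_add_cos_sq _
  have E3 : Real.sin (π * ((β + 2 + 1) / 3)) = -s := by
    rw [show π * ((β + 2 + 1) / 3) = π * (β / 3) + π by ring, Real.sin_add_pi]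
  have E2 : Real.sin (π * ((β + 1 + 1) / 3)) = (r * cc - s) / 2 := by
    rw [show π * ((β + 1 + 1) / 3) = (π * (β / 3) + π / 3) + π / 3 by ring,
      Real.sin_add, Real.sin_add, Real.cos_add, Real.sin_pi_div_three, Real.cos_pi_div_three]
    rw [← hr_def]
    linear_combination (-(s / 4)) * hr
  have E1 : Real.sin (π * ((β + 1) / 3)) = (s + r * cc) / 2 := by
    rw [show π * ((β + 1) / 3) = π * (β / 3) + π / 3 by ring,
      Real.sin_add, Real.sin_pi_div_three, Real.cos_pi_div_three]
    rw [← hr_def]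
    ring
  have E4 : Real.sin (2 * π / 3 * β) = 2 * s * cc := by
    rw [show 2 * π / 3 * β = 2 * (π * (β / 3)) by ring, Real.sin_two_mul]
  have E5 : Real.sin (2 * π / 3 * (β - 2)) = -(s * cc) + (2 * cc ^ 2 - 1) * (r / 2) := by
    rw [show 2 * π / 3 * (β - 2) = (2 * (π * (β / 3)) - π / 3) - π by ring,
      Real.sin_sub_pi, Real.sin_sub, Real.cos_pi_div_three, Real.sin_pi_div_three,
      Real.sin_two_mul, Real.cos_two_mul]
    rw [← hr_def]
    ring
  have E6 : Real.sin (π * β) = 3 * s - 4 * s ^ 3 := by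
    rw [show π * β = 3 * (π * (β / 3)) by ring, Real.sin_three_mul]
  have hs0 : s ≠ 0 := by
    rw [hs_def]
    exact hsin_ne (β / 3) (by linarith) (by linarith) (fun h => h0 (by linarith))
      (fun h => by linarith) (fun h => by linarith)
  have hS2 : (r * cc - s) / 2 ≠ 0 := by
    rw [← E2]
    have := hsin_ne ((β + 2) / 3) (by linarith) (by linarith) (by intro h; linarith)
      (by intro h; exact h1 (by linarith)) (by intro h; linarith)
    rwa [show π * ((β + 2) / 3) = π * ((β + 1 + 1) / 3) by ring] at this
  have hS1 : (s + r * cc) / 2 ≠ 0 := by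
    rw [← E1]
    exact hsin_ne ((β + 1) / 3) (by linarith) (by linarith) (by intro h; linarith)
      (by intro h; exact h2 (by linarith)) (by intro h; linarith)
  have hs3 : 3 * s - 4 * s ^ 3 ≠ 0 := by
    rw [← E6]
    exact hsin_ne β hβ₁ hβ₂ h0 h1 h2
  have hA1 : a ^ (β - 1) = a ^ β / a := by rw [Real.rpow_sub ha, Real.rpow_one]
  have hB1 : b ^ (β - 1) = b ^ β / b := by rw [Real.rpow_sub hb, Real.rpow_one]
  have hA2 : a ^ (β - 2) = a ^ β / a ^ 2 := by
    rw [Real.rpow_sub ha, show (2:ℝ) = ((2:ℕ):ℝ) by norm_num, Real.rpow_natCast]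
  have hB2 : b ^ (β - 2) = b ^ β / b ^ 2 := by
    rw [Real.rpow_sub hb, show (2:ℝ) = ((2:ℕ):ℝ) by norm_num, Real.rpow_natCast]
  rw [show β + 2 - 2 = β by ring, show β + 1 - 2 = β - 1 by ring,
    E3, E2, E1, E4, E5, E6, hA1, hB1, hA2, hB2]
  have hS2' : r * cc - s ≠ 0 := fun h => hS2 (by rw [h]; norm_num)
  have hS1' : s + r * cc ≠ 0 := fun h => hS1 (by rw [h]; norm_num)
  generalize a ^ β = P at *
  generalize b ^ β = Q at *
  have hs3' : 3 - s ^ 2 * 4 ≠ 0 := fun h => hs3 (by linear_combination s * h)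
  field_simp
  linear_combination (a ^ 3 - b ^ 3) * ((3 - 4 * s ^ 2) * (-(((P - Q) * a * b) * r * cc ^ 2) + 2 * s * cc * ((P - Q) * a * b) + 4 * s * cc * (P * b ^ 2 - Q * a ^ 2)) + 3 * (((P - Q) * a * b) * (-(2 * s * cc) + r * (2 * cc ^ 2 - 1)) - 4 * s * cc * (P * b ^ 2 - Q * a ^ 2)) * cc ^ 2) * hr
    + (a ^ 3 - b ^ 3) * ((3 - 4 * s ^ 2) * 3 * r * ((P - Q) * a * b) + 9 * (((P - Q) * a * b) * (-(2 * s * cc) + r * (2 * cc ^ 2 - 1)) - 4 * s * cc * (P * b ^ 2 - Q * a ^ 2))) * hsc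
end

section
/- Let a, b be positive real numbers with a ≠ b, let β be a real number with −1 < β < 3 and β ∉ {0, 1, 2}, and set θ = 2π/3. Then ∫₀^∞ x^β (x − a) / ((x³ + a³)(x² − b x + b²)) dx = (2π/(3(a³−b³))) · csc(π(β−1)) · [ √3 b^{β−1}(b sin(θ(β+1)) + a sin(θβ)) − a^{β−1}(b cos(θβ) − a cos(θ(β+1))) − a^{β−1}(a − b) ]. -/
open MeasureTheory

open Real MeasureTheory Set intervalIntegral

lemma real_beta {s : ℝ} (h0 : 0 < s) (h1 : s < 1) :
    ∫ x in Ioo (0:ℝ) 1, x ^ (s-1) * (1-x) ^ (-s) = π / Real.sin (π * s) := by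
  have hs : 0 < (1:ℝ) - s := by linarith
  have hB := Complex.Gamma_mul_Gamma_eq_betaIntegral (s := (s:ℂ)) (t := ((1-s : ℝ):ℂ))
    (by simpa using h0) (by simpa using hs)
  have heq : Complex.betaIntegral (s:ℝ) ((1-s:ℝ):ℂ) =
      ((∫ x in (0:ℝ)..1, x ^ (s-1) * (1-x) ^ (-s) : ℝ) : ℂ) := by
    rw [Complex.betaIntegral]
    rw [← intervalIntegral.integral_ofReal]
    apply intervalIntegral.integral_congr_ae
    have : ∀ᵐ (x:ℝ) ∂volume, x ∈ uIoc (0:ℝ) 1 →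
        (x:ℂ) ^ ((s:ℂ) - 1) * ((1:ℂ) - x) ^ (((1-s:ℝ):ℂ) - 1) =
          ((x ^ (s-1) * (1-x) ^ (-s) : ℝ) : ℂ) := by
      filter_upwards [] with x hx
      rw [uIoc_of_le (by norm_num)] at hx
      have hx0 : (0:ℝ) ≤ x := le_of_lt hx.1
      have hx1 : (0:ℝ) ≤ 1 - x := by linarith [hx.2]
      push_cast
      rw [show ((s:ℂ) - 1) = ((s-1 : ℝ):ℂ) by push_cast; ring,
        show ((1:ℂ) - (s:ℂ) - 1) = ((-s : ℝ):ℂ) by push_cast; ring,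
        show ((1:ℂ) - (x:ℂ)) = ((1-x:ℝ):ℂ) by push_cast; ring,
        ← Complex.ofReal_cpow hx0, ← Complex.ofReal_cpow hx1]

    exact this
  have hone : (s:ℂ) + ((1-s:ℝ):ℂ) = 1 := by push_cast; ring
  rw [hone, Complex.Gamma_one, one_mul, heq, Complex.Gamma_ofReal, Complex.Gamma_ofReal,
    ← Complex.ofReal_mul] at hB
  have hreal : Real.Gamma s * Real.Gamma (1-s) =
      ∫ x in (0:ℝ)..1, x ^ (s-1) * (1-x) ^ (-s) := by exact_mod_cast hB
  rw [Real.Gamma_mul_Gamma_one_sub] at hreal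
  rw [intervalIntegral.integral_of_le (by norm_num), integral_Ioc_eq_integral_Ioo] at hreal
  exact hreal.symm

lemma mellin_base {s : ℝ} (h0 : 0 < s) (h1 : s < 1) :
    ∫ x in Ioi (0:ℝ), x ^ (s-1) / (1 + x) = π / Real.sin (π * s) := by
  have himg : (fun x => x / (1 - x)) '' Ioo (0:ℝ) 1 = Ioi 0 := by
    ext y
    simp only [mem_image, mem_Ioi, mem_Ioo]
    constructor
    · rintro ⟨x, ⟨hx0, hx1⟩, rfl⟩
      exact div_pos hx0 (by linarith)
    · intro hy
      refine ⟨y / (1 + y), ⟨div_pos hy (by linarith), ?_⟩, ?_⟩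
      · rw [div_lt_one (by linarith)]; linarith
      · field_simp; ring
  have hderiv : ∀ x ∈ Ioo (0:ℝ) 1, HasDerivWithinAt (fun x => x / (1 - x))
      ((1 - x)⁻¹ ^ 2) (Ioo 0 1) x := by
    intro x hx
    have h1x : (1:ℝ) - x ≠ 0 := by have := hx.2; intro h; linarith [h]
    have : HasDerivAt (fun x : ℝ => x / (1 - x))
        ((1 * (1 - x) - x * (-1)) / (1 - x) ^ 2) x := by
      exact (hasDerivAt_id x).div ((hasDerivAt_id x).const_sub 1) h1x
    refine this.hasDerivWithinAt.congr_deriv ?_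
    rw [inv_pow, ← one_div]; congr 1; ring
  have hinj : InjOn (fun x => x / (1 - x)) (Ioo (0:ℝ) 1) := by
    intro x hx y hy hxy
    have hx1 : (1:ℝ) - x ≠ 0 := by have := hx.2; intro h; linarith [h]
    have hy1 : (1:ℝ) - y ≠ 0 := by have := hy.2; intro h; linarith [h]
    field_simp at hxy
    nlinarith [hxy]
  have := integral_image_eq_integral_abs_deriv_smul measurableSet_Ioo hderiv hinj
    (fun x => x ^ (s-1) / (1 + x))
  rw [himg] at this
  rw [this, ← real_beta h0 h1]
  apply setIntegral_congr_fun measurableSet_Ioo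
  intro x hx
  have hx0 : (0:ℝ) < x := hx.1
  have hx1 : (0:ℝ) < 1 - x := by linarith [hx.2]
  have key : (1:ℝ) + x / (1 - x) = (1 - x)⁻¹ := by field_simp; ring
  simp only [smul_eq_mul]
  rw [key, abs_of_pos (by positivity), div_rpow (le_of_lt hx0) (le_of_lt hx1),
    rpow_neg (le_of_lt hx1), rpow_sub hx1, rpow_one]
  have hne1 : (1-x) ^ s ≠ 0 := ne_of_gt (rpow_pos_of_pos hx1 s)
  have hne2 : (1:ℝ) - x ≠ 0 := ne_of_gt hx1
  field_simp

lemma mellin_cube {s : ℝ} (h0 : 0 < s) (h3 : s < 3) :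
    ∫ x in Ioi (0:ℝ), x ^ (s-1) / (1 + x ^ (3:ℕ)) = π / (3 * Real.sin (π * s / 3)) := by
  have h : ∫ x in Ioi (0:ℝ), ((3:ℝ) * x ^ ((3:ℝ) - 1)) • ((x ^ (3:ℝ)) ^ (s/3 - 1) / (1 + x ^ (3:ℝ)) / 3)
      = ∫ y in Ioi (0:ℝ), y ^ (s/3 - 1) / (1 + y) / 3 :=
    integral_comp_rpow_Ioi_of_pos (g := fun y => y ^ (s/3 - 1) / (1 + y) / 3) (p := 3) (by norm_num)
  have h0' : 0 < s/3 := by linarith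
  have h1' : s/3 < 1 := by linarith
  have key : ∫ x in Ioi (0:ℝ), x ^ (s-1) / (1 + x ^ (3:ℕ)) =
      ∫ x in Ioi (0:ℝ), ((3:ℝ) * x ^ ((3:ℝ) - 1)) • ((x ^ (3:ℝ)) ^ (s/3 - 1) / (1 + x ^ (3:ℝ)) / 3) := by
    apply setIntegral_congr_fun measurableSet_Ioi
    intro x hx
    have hx0 : (0:ℝ) < x := hx
    dsimp only
    have hx3 : (x:ℝ) ^ (3:ℝ) = x ^ (3:ℕ) := by
      rw [show (3:ℝ) = ((3:ℕ):ℝ) by norm_num, rpow_natCast]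
    have e1 : ((x:ℝ) ^ (3:ℝ)) ^ (s/3-1) = x ^ (s-3) := by
      rw [← rpow_mul hx0.le, show (3:ℝ)*(s/3-1) = s-3 by ring]
    have e3 : x ^ ((3:ℝ)-1) * x ^ (s-3) = x ^ (s-1) := by
      rw [← rpow_add hx0]; ring_nf
    rw [smul_eq_mul, e1, hx3,
      show (3 * x ^ ((3:ℝ)-1)) * (x ^ (s-3) / (1 + (x:ℝ) ^ (3:ℕ)) / 3)
        = (x ^ ((3:ℝ)-1) * x ^ (s-3)) / (1 + x ^ (3:ℕ)) by ring, e3]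
  rw [key, h]
  rw [show ∫ y in Ioi (0:ℝ), y ^ (s/3 - 1) / (1 + y) / 3
      = (1/3) * ∫ y in Ioi (0:ℝ), y ^ (s/3 - 1) / (1 + y) by
    rw [← MeasureTheory.integral_const_mul]; congr 1; ext y; ring]
  rw [mellin_base h0' h1']
  rw [show π * (s/3) = π * s / 3 by ring]
  ring

lemma mellin_scaled {c s : ℝ} (hc : 0 < c) (h0 : 0 < s) (h3 : s < 3) :
    ∫ x in Ioi (0:ℝ), x ^ (s-1) / (x ^ (3:ℕ) + c ^ (3:ℕ)) =
      c ^ (s-3) * (π / (3 * Real.sin (π * s / 3))) := by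
  have h : ∫ x in Ioi (0:ℝ), (c * x) ^ (s-1) / ((c * x) ^ (3:ℕ) + c ^ (3:ℕ)) =
      c⁻¹ • ∫ x in Ioi (0:ℝ), x ^ (s-1) / (x ^ (3:ℕ) + c ^ (3:ℕ)) := by
    have := integral_comp_mul_left_Ioi
      (g := fun x => x ^ (s-1) / (x ^ (3:ℕ) + c ^ (3:ℕ))) 0 hc
    rw [mul_zero] at this
    exact this
  have key : ∫ x in Ioi (0:ℝ), (c * x) ^ (s-1) / ((c*x) ^ (3:ℕ) + c ^ (3:ℕ)) =
      ∫ x in Ioi (0:ℝ), (c ^ (s-1) / c ^ (3:ℕ)) * (x ^ (s-1) / (1 + x ^ (3:ℕ))) := by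
    apply setIntegral_congr_fun measurableSet_Ioi
    intro x hx
    have hx0 : (0:ℝ) < x := hx
    dsimp only
    rw [mul_rpow hc.le hx0.le]
    have hne1 : ((c*x) ^ (3:ℕ) + c ^ (3:ℕ)) ≠ 0 := by positivity
    have hne2 : ((1:ℝ) + x ^ (3:ℕ)) ≠ 0 := by positivity
    field_simp
    ring
  rw [key, MeasureTheory.integral_const_mul, mellin_cube h0 h3] at h
  have hc3 : (c:ℝ) ^ (3:ℕ) ≠ 0 := by positivity
  have hfin : (∫ x in Ioi (0:ℝ), x ^ (s-1) / (x ^ (3:ℕ) + c ^ (3:ℕ)))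
      = c * (c ^ (s-1) / c ^ (3:ℕ) * (π / (3 * Real.sin (π * s / 3)))) := by
    have h5 : c * (c ^ (s-1) / c ^ (3:ℕ) * (π / (3 * Real.sin (π * s / 3))))
        = c * (c⁻¹ • ∫ x in Ioi (0:ℝ), x ^ (s-1) / (x ^ (3:ℕ) + c ^ (3:ℕ))) := by rw [h]
    rw [smul_eq_mul, ← mul_assoc c c⁻¹, mul_inv_cancel₀ hc.ne', one_mul] at h5
    linear_combination -h5
  rw [hfin]
  have h1 : c ^ (s-1) = c ^ s / c := by rw [rpow_sub hc, rpow_one]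
  have h2 : c ^ (s-3) = c ^ s / c ^ (3:ℕ) := by
    rw [rpow_sub hc, show (3:ℝ) = ((3:ℕ):ℝ) by norm_num, rpow_natCast]
  have h6 : c * (c ^ s / c) = c ^ s := by field_simp
  rw [h1, h2, show c * (c ^ s / c / c ^ (3:ℕ) * (π / (3 * Real.sin (π * s / 3))))
      = (c * (c ^ s / c)) / c ^ (3:ℕ) * (π / (3 * Real.sin (π * s / 3))) by ring, h6]

lemma int_aux {e : ℝ} (he0 : -1 < e) {d : ℝ} (hde : e + d < -1) {C : ℝ} (g : ℝ → ℝ)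
    (hg : ContinuousOn g (Ioi (0:ℝ)))
    (hb1 : ∀ x : ℝ, 0 < x → x ≤ 1 → |g x| ≤ C * x ^ e)
    (hb2 : ∀ x : ℝ, 1 ≤ x → |g x| ≤ C * x ^ (e + d)) :
    IntegrableOn g (Ioi (0:ℝ)) := by
  have hmeas : AEStronglyMeasurable g (volume.restrict (Ioi (0:ℝ))) :=
    hg.aestronglyMeasurable measurableSet_Ioi
  have hsplit : Ioi (0:ℝ) = Ioc 0 1 ∪ Ioi 1 := by
    rw [Ioc_union_Ioi_eq_Ioi]; norm_num
  rw [hsplit]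
  apply IntegrableOn.union
  · -- on Ioc 0 1, compare with x ^ e
    have hint : IntegrableOn (fun x : ℝ => C * x ^ e) (Ioc (0:ℝ) 1) := by
      rw [integrableOn_Ioc_iff_integrableOn_Ioo]
      exact ((integrableOn_Ioo_rpow_iff one_pos).2 he0).const_mul C
    apply Integrable.mono hint (hmeas.mono_set (by rw [hsplit]; exact subset_union_left))
    filter_upwards [ae_restrict_mem measurableSet_Ioc] with x hx
    rw [Real.norm_eq_abs, Real.norm_eq_abs]
    exact le_trans (hb1 x hx.1 hx.2) (le_abs_self _)
  · have hint : IntegrableOn (fun x : ℝ => C * x ^ (e+d)) (Ioi (1:ℝ)) :=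
      (integrableOn_Ioi_rpow_of_lt hde one_pos).const_mul C
    apply Integrable.mono hint (hmeas.mono_set (by rw [hsplit]; exact subset_union_right))
    filter_upwards [ae_restrict_mem measurableSet_Ioi] with x hx
    rw [Real.norm_eq_abs, Real.norm_eq_abs]
    exact le_trans (hb2 x (le_of_lt hx)) (le_abs_self _)

lemma int_one {c s : ℝ} (hc : 0 < c) (h0 : 0 < s) (h3 : s < 3) :
    IntegrableOn (fun x : ℝ => x ^ (s-1) / (x ^ (3:ℕ) + c ^ (3:ℕ))) (Ioi (0:ℝ)) := by
  apply int_aux (e := s-1) (d := -3) (C := max 1 (c ^ (3:ℕ))⁻¹) (by linarith) (by linarith)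
  · apply ContinuousOn.div
      (ContinuousOn.rpow_const continuousOn_id (fun x hx => Or.inl (ne_of_gt hx))) (by fun_prop)
    intro x hx
    have hx0 : (0:ℝ) < x := hx
    positivity
  · intro x hx0 hx1
    rw [abs_of_pos (by positivity)]
    calc x ^ (s-1) / (x ^ (3:ℕ) + c ^ (3:ℕ)) ≤ x ^ (s-1) / c ^ (3:ℕ) := by
            gcongr <;> first
              | positivity
              | exact (rpow_pos_of_pos hx0 _).le
              | nlinarith [pow_pos hx0 3, pow_pos hc 3]
      _ = (c ^ (3:ℕ))⁻¹ * x ^ (s-1) := by ring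
      _ ≤ max 1 (c ^ (3:ℕ))⁻¹ * x ^ (s-1) := by
            gcongr <;> first
              | exact (rpow_pos_of_pos hx0 _).le
              | exact le_max_right _ _
  · intro x hx1
    have hx0 : (0:ℝ) < x := lt_of_lt_of_le one_pos hx1
    rw [abs_of_pos (by positivity)]
    have key : x ^ (s-1) / (x ^ (3:ℕ) + c ^ (3:ℕ)) ≤ x ^ (s-1+(-3)) := by
      rw [rpow_add hx0, show ((-3):ℝ) = -((3:ℕ):ℝ) by norm_num, rpow_neg hx0.le, rpow_natCast]
      rw [div_eq_mul_inv]
      gcongr <;> first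
        | exact (rpow_pos_of_pos hx0 _).le
        | positivity
        | nlinarith [pow_pos hx0 3, pow_pos hc 3]
    calc x ^ (s-1) / (x ^ (3:ℕ) + c ^ (3:ℕ)) ≤ x ^ (s-1+(-3)) := key
      _ = 1 * x ^ (s-1+(-3)) := (one_mul _).symm
      _ ≤ max 1 (c ^ (3:ℕ))⁻¹ * x ^ (s-1+(-3)) := by
            gcongr <;> first
              | exact (rpow_pos_of_pos hx0 _).le
              | exact le_max_left _ _

lemma int_two {a b s : ℝ} (ha : 0 < a) (hb : 0 < b) (h0 : 0 < s) (h6 : s < 6) :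
    IntegrableOn (fun x : ℝ => x ^ (s-1) / ((x ^ (3:ℕ) + a ^ (3:ℕ)) * (x ^ (3:ℕ) + b ^ (3:ℕ))))
      (Ioi (0:ℝ)) := by
  apply int_aux (e := s-1) (d := -6) (C := max 1 (a ^ (3:ℕ) * b ^ (3:ℕ))⁻¹)
    (by linarith) (by linarith)
  · apply ContinuousOn.div
      (ContinuousOn.rpow_const continuousOn_id (fun x hx => Or.inl (ne_of_gt hx))) (by fun_prop)
    intro x hx
    have hx0 : (0:ℝ) < x := hx
    positivity
  · intro x hx0 hx1
    rw [abs_of_pos (by positivity)]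
    calc x ^ (s-1) / ((x ^ (3:ℕ) + a ^ (3:ℕ)) * (x ^ (3:ℕ) + b ^ (3:ℕ)))
        ≤ x ^ (s-1) / (a ^ (3:ℕ) * b ^ (3:ℕ)) := by
            gcongr <;> first
              | exact (rpow_pos_of_pos hx0 _).le
              | positivity
              | nlinarith [pow_pos hx0 3, pow_pos ha 3, pow_pos hb 3]
      _ = (a ^ (3:ℕ) * b ^ (3:ℕ))⁻¹ * x ^ (s-1) := by ring
      _ ≤ max 1 (a ^ (3:ℕ) * b ^ (3:ℕ))⁻¹ * x ^ (s-1) := by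
            gcongr <;> first
              | exact (rpow_pos_of_pos hx0 _).le
              | exact le_max_right _ _
  · intro x hx1
    have hx0 : (0:ℝ) < x := lt_of_lt_of_le one_pos hx1
    rw [abs_of_pos (by positivity)]
    have key : x ^ (s-1) / ((x ^ (3:ℕ) + a ^ (3:ℕ)) * (x ^ (3:ℕ) + b ^ (3:ℕ)))
        ≤ x ^ (s-1+(-6)) := by
      rw [rpow_add hx0, show ((-6):ℝ) = -((6:ℕ):ℝ) by norm_num, rpow_neg hx0.le, rpow_natCast]
      rw [div_eq_mul_inv]
      gcongr <;> first
        | exact (rpow_pos_of_pos hx0 _).le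
        | positivity
        | nlinarith [pow_pos hx0 3, pow_pos ha 3, pow_pos hb 3]
    calc x ^ (s-1) / ((x ^ (3:ℕ) + a ^ (3:ℕ)) * (x ^ (3:ℕ) + b ^ (3:ℕ))) ≤ x ^ (s-1+(-6)) := key
      _ = 1 * x ^ (s-1+(-6)) := (one_mul _).symm
      _ ≤ max 1 (a ^ (3:ℕ) * b ^ (3:ℕ))⁻¹ * x ^ (s-1+(-6)) := by
            gcongr <;> first
              | exact (rpow_pos_of_pos hx0 _).le
              | exact le_max_left _ _

lemma Kval_lt3 {a b s : ℝ} (ha : 0 < a) (hb : 0 < b) (hab : a ≠ b) (h0 : 0 < s) (h3 : s < 3) :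
    ∫ x in Ioi (0:ℝ), x ^ (s-1) / ((x ^ (3:ℕ) + a ^ (3:ℕ)) * (x ^ (3:ℕ) + b ^ (3:ℕ)))
      = π / (3 * Real.sin (π * s / 3)) * (a ^ (s-3) - b ^ (s-3)) / (b ^ (3:ℕ) - a ^ (3:ℕ)) := by
  have hba : b ^ (3:ℕ) - a ^ (3:ℕ) ≠ 0 := by
    rcases lt_or_gt_of_ne hab with h | h
    · exact ne_of_gt (by nlinarith [sq_nonneg (a+b), sq_nonneg (a-b), mul_pos ha hb])
    · exact ne_of_lt (by nlinarith [sq_nonneg (a+b), sq_nonneg (a-b), mul_pos ha hb])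
  have key : ∀ x ∈ Ioi (0:ℝ), x ^ (s-1) / ((x ^ (3:ℕ) + a ^ (3:ℕ)) * (x ^ (3:ℕ) + b ^ (3:ℕ)))
      = (b ^ (3:ℕ) - a ^ (3:ℕ))⁻¹ *
        (x ^ (s-1) / (x ^ (3:ℕ) + a ^ (3:ℕ)) - x ^ (s-1) / (x ^ (3:ℕ) + b ^ (3:ℕ))) := by
    intro x hx
    have hx0 : (0:ℝ) < x := hx
    have hA : x ^ (3:ℕ) + a ^ (3:ℕ) ≠ 0 := by positivity
    have hB : x ^ (3:ℕ) + b ^ (3:ℕ) ≠ 0 := by positivity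
    field_simp
    ring
  rw [setIntegral_congr_fun measurableSet_Ioi key, MeasureTheory.integral_const_mul,
    integral_sub (int_one ha h0 h3) (int_one hb h0 h3),
    mellin_scaled ha h0 h3, mellin_scaled hb h0 h3]
  have hsin : Real.sin (π * s / 3) ≠ 0 := by
    apply ne_of_gt (Real.sin_pos_of_pos_of_lt_pi (by positivity) ?_)
    rw [div_lt_iff₀ (by norm_num)]
    nlinarith [Real.pi_pos]
  field_simp

lemma K_inv {a b s : ℝ} (ha : 0 < a) (hb : 0 < b) :
    ∫ x in Ioi (0:ℝ), x ^ (s-1) / ((x ^ (3:ℕ) + a ^ (3:ℕ)) * (x ^ (3:ℕ) + b ^ (3:ℕ)))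
      = (a*b) ^ (s-3) *
        ∫ x in Ioi (0:ℝ), x ^ (6-s-1) / ((x ^ (3:ℕ) + a ^ (3:ℕ)) * (x ^ (3:ℕ) + b ^ (3:ℕ))) := by
  have hab : (0:ℝ) < a * b := mul_pos ha hb
  have himg : (fun x => a * b / x) '' Ioi (0:ℝ) = Ioi 0 := by
    ext y
    simp only [mem_image, mem_Ioi]
    constructor
    · rintro ⟨x, hx, rfl⟩; positivity
    · intro hy; exact ⟨a * b / y, by positivity, by field_simp⟩
  have hderiv : ∀ x ∈ Ioi (0:ℝ), HasDerivWithinAt (fun x => a * b / x)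
      (-(a*b) / x ^ (2:ℕ)) (Ioi 0) x := by
    intro x hx
    have hx0 : (0:ℝ) < x := hx
    have hd := (hasDerivAt_const x (a*b)).div (hasDerivAt_id x) hx0.ne'
    have : HasDerivAt (fun x : ℝ => a * b / x) (-(a*b) / x ^ (2:ℕ)) x := by
      refine hd.congr_deriv ?_
      simp only [id]; ring
    exact this.hasDerivWithinAt
  have hinj : InjOn (fun x => a * b / x) (Ioi (0:ℝ)) := by
    intro x hx y hy hxy
    have hx0 : (0:ℝ) < x := hx
    have hy0 : (0:ℝ) < y := hy
    field_simp at hxy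
    exact hxy.symm
  have h := integral_image_eq_integral_abs_deriv_smul measurableSet_Ioi hderiv hinj
    (fun x => x ^ (s-1) / ((x ^ (3:ℕ) + a ^ (3:ℕ)) * (x ^ (3:ℕ) + b ^ (3:ℕ))))
  rw [himg] at h
  rw [h, ← MeasureTheory.integral_const_mul]
  apply setIntegral_congr_fun measurableSet_Ioi
  intro x hx
  have hx0 : (0:ℝ) < x := hx
  dsimp only
  rw [smul_eq_mul,
    abs_of_neg (div_neg_of_neg_of_pos (neg_lt_zero.mpr hab) (by positivity) :
      -(a*b) / x ^ (2:ℕ) < 0), neg_div, neg_neg]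
  have hX : (0:ℝ) < x ^ s := rpow_pos_of_pos hx0 s
  have e2 : x ^ (6-s-1) = x ^ (6:ℕ) / (x ^ s * x) := by
    rw [show (6:ℝ)-s-1 = (((6:ℕ):ℝ)) - (s+1) by push_cast; ring, rpow_sub hx0, rpow_natCast,
      rpow_add hx0, rpow_one]
  have e3 : (a*b/x) ^ (s-1) = ((a*b) ^ s / (a*b)) / (x ^ s / x) := by
    rw [div_rpow hab.le hx0.le, rpow_sub hab, rpow_one, rpow_sub hx0, rpow_one]
  have e4 : (a*b) ^ (s-3) = (a*b) ^ s / (a*b) ^ (3:ℕ) := by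
    rw [rpow_sub hab, show (3:ℝ) = ((3:ℕ):ℝ) by norm_num, rpow_natCast]
  have hCX : (0:ℝ) < (a*b) ^ s := rpow_pos_of_pos hab s
  have hd1 : ((a*b/x) ^ (3:ℕ) + a ^ (3:ℕ)) ≠ 0 := by positivity
  have hd2 : ((a*b/x) ^ (3:ℕ) + b ^ (3:ℕ)) ≠ 0 := by positivity
  have hd3 : (x ^ (3:ℕ) + a ^ (3:ℕ)) ≠ 0 := by positivity
  have hd4 : (x ^ (3:ℕ) + b ^ (3:ℕ)) ≠ 0 := by positivity
  rw [e3, e4, e2, div_pow] at *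
  field_simp
  ring

lemma Kval {a b s : ℝ} (ha : 0 < a) (hb : 0 < b) (hab : a ≠ b) (h0 : 0 < s) (h6 : s < 6)
    (hs3 : s ≠ 3) :
    ∫ x in Ioi (0:ℝ), x ^ (s-1) / ((x ^ (3:ℕ) + a ^ (3:ℕ)) * (x ^ (3:ℕ) + b ^ (3:ℕ)))
      = π / (3 * Real.sin (π * s / 3)) * (a ^ (s-3) - b ^ (s-3)) / (b ^ (3:ℕ) - a ^ (3:ℕ)) := by
  rcases lt_or_gt_of_ne hs3 with h3 | h3
  · exact Kval_lt3 ha hb hab h0 h3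
  · rw [K_inv ha hb, Kval_lt3 ha hb hab (by linarith) (by linarith)]
    have hsin : Real.sin (π * (6-s) / 3) = -Real.sin (π * s / 3) := by
      rw [show π * (6-s)/3 = 2*π - π*s/3 by ring, Real.sin_sub, Real.sin_two_pi,
        Real.cos_two_pi]
      ring
    have hsin_ne : Real.sin (π * s / 3) ≠ 0 := by
      have h1 : Real.sin (π * s / 3 - π) > 0 := by
        apply Real.sin_pos_of_pos_of_lt_pi
        · nlinarith [Real.pi_pos]
        · nlinarith [Real.pi_pos]
      rw [Real.sin_sub_pi] at h1
      intro h; rw [h] at h1; norm_num at h1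
    have ea : a ^ (6-s-3) = (a ^ (s-3))⁻¹ := by
      rw [show (6:ℝ)-s-3 = -(s-3) by ring, rpow_neg ha.le]
    have eb : b ^ (6-s-3) = (b ^ (s-3))⁻¹ := by
      rw [show (6:ℝ)-s-3 = -(s-3) by ring, rpow_neg hb.le]
    have hmul : (a*b) ^ (s-3) = a ^ (s-3) * b ^ (s-3) := mul_rpow ha.le hb.le
    have hane : a ^ (s-3) ≠ 0 := ne_of_gt (rpow_pos_of_pos ha _)
    have hbne : b ^ (s-3) ≠ 0 := ne_of_gt (rpow_pos_of_pos hb _)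
    have hba : b ^ (3:ℕ) - a ^ (3:ℕ) ≠ 0 := by
      rcases lt_or_gt_of_ne hab with h | h
      · exact ne_of_gt (by nlinarith [sq_nonneg (a+b), sq_nonneg (a-b), mul_pos ha hb])
      · exact ne_of_lt (by nlinarith [sq_nonneg (a+b), sq_nonneg (a-b), mul_pos ha hb])
    rw [hsin, hmul, ea, eb]
    field_simp
    ring

lemma assemble (s c t A B a b : ℝ) (hsc : s^2 + c^2 = 1) (ht : t^2 = 3)
    (hs : s ≠ 0) (hS1 : s + t*c ≠ 0) (hS2 : t*c - s ≠ 0) (ha : a ≠ 0) (hb : b ≠ 0)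
    (hQ : b^(3:ℕ) - a^(3:ℕ) ≠ 0) :
    π / (3 * (-s)) * (A*a - B*b) / (b^(3:ℕ) - a^(3:ℕ))
      + (b - a) * (π / (3 * ((t*c - s)/2)) * (A - B) / (b^(3:ℕ) - a^(3:ℕ)))
      - a*b * (π / (3 * ((s + t*c)/2)) * (A/a - B/b) / (b^(3:ℕ) - a^(3:ℕ)))
    = 2*π / (3*(a^(3:ℕ) - b^(3:ℕ))) * (-(s*(s+t*c)*(t*c-s)))⁻¹ *
        (t*B*(b*(-(s*c) + t*(c^2-s^2)/2) + a*(2*s*c))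
          - A*(b*(c^2-s^2) - a*(-(c^2-s^2)/2 - t*s*c))
          - A*(a-b)) := by
  set D : ℝ := 3*s*(s+t*c)*(t*c-s)*(b^(3:ℕ)-a^(3:ℕ))*(a^2*b^2) with hD_def
  have hD : D ≠ 0 := by
    apply mul_ne_zero (mul_ne_zero (mul_ne_zero (mul_ne_zero (mul_ne_zero (by norm_num) hs)
      hS1) hS2) hQ)
    positivity
  have hL : (π / (3 * (-s)) * (A*a - B*b) / (b^(3:ℕ) - a^(3:ℕ))
      + (b - a) * (π / (3 * ((t*c - s)/2)) * (A - B) / (b^(3:ℕ) - a^(3:ℕ)))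
      - a*b * (π / (3 * ((s + t*c)/2)) * (A/a - B/b) / (b^(3:ℕ) - a^(3:ℕ)))) * D
      = π * (c^2*t^2*B*a^2*b^3 - c^2*t^2*A*a^3*b^2 - 2*s*c*t*B*a^2*b^3 + 4*s*c*t*B*a^3*b^2
        - 2*s*c*t*A*a^3*b^2 - 3*s^2*B*a^2*b^3 + 4*s^2*A*a^2*b^3 - s^2*A*a^3*b^2) := by
    rw [hD_def]
    field_simp
    ring
  have hR : (2*π / (3*(a^(3:ℕ) - b^(3:ℕ))) * (-(s*(s+t*c)*(t*c-s)))⁻¹ *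
        (t*B*(b*(-(s*c) + t*(c^2-s^2)/2) + a*(2*s*c))
          - A*(b*(c^2-s^2) - a*(-(c^2-s^2)/2 - t*s*c))
          - A*(a-b))) * D
      = π * (2*A*a^2*b^3 - 2*A*a^3*b^2 - 2*c^2*A*a^2*b^3 - c^2*A*a^3*b^2 + c^2*t^2*B*a^2*b^3
        - 2*s*c*t*B*a^2*b^3 + 4*s*c*t*B*a^3*b^2 - 2*s*c*t*A*a^3*b^2 + 2*s^2*A*a^2*b^3
        + s^2*A*a^3*b^2 - s^2*t^2*B*a^2*b^3) := by
    rw [hD_def]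
    have hQ' : a^(3:ℕ) - b^(3:ℕ) ≠ 0 := fun h => hQ (by linarith)
    have hP : -(s*(s+t*c)*(t*c-s)) ≠ 0 := by
      simp only [neg_ne_zero]
      exact mul_ne_zero (mul_ne_zero hs hS1) hS2
    field_simp
    ring
  have key : π * (c^2*t^2*B*a^2*b^3 - c^2*t^2*A*a^3*b^2 - 2*s*c*t*B*a^2*b^3 + 4*s*c*t*B*a^3*b^2
        - 2*s*c*t*A*a^3*b^2 - 3*s^2*B*a^2*b^3 + 4*s^2*A*a^2*b^3 - s^2*A*a^3*b^2)
      = π * (2*A*a^2*b^3 - 2*A*a^3*b^2 - 2*c^2*A*a^2*b^3 - c^2*A*a^3*b^2 + c^2*t^2*B*a^2*b^3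
        - 2*s*c*t*B*a^2*b^3 + 4*s*c*t*B*a^3*b^2 - 2*s*c*t*A*a^3*b^2 + 2*s^2*A*a^2*b^3
        + s^2*A*a^3*b^2 - s^2*t^2*B*a^2*b^3) := by
    linear_combination (π*(-(c^2*A*a^3*b^2) + s^2*B*a^2*b^3))*ht
      + (π*(2*A*a^2*b^3 - 2*A*a^3*b^2))*hsc
  exact mul_right_cancel₀ hD (by rw [hL, hR, key])


set_option maxHeartbeats 2000000 in
/-- Evaluation of `I₄(β) = ∫₀^∞ x^β (x−a) /((x³+a³)(x²−bx+b²)) dx` for `−1 < β < 3`,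
`β ∉ {0,1,2}`, with `θ = 2π/3` and `csc x = 1/sin x`. -/
theorem I4_eval (a b : ℝ) (ha : 0 < a) (hb : 0 < b) (hab : a ≠ b)
    (β : ℝ) (hβ₁ : -1 < β) (hβ₂ : β < 3) (h0 : β ≠ 0) (h1 : β ≠ 1) (h2 : β ≠ 2) :
    ∫ x in Set.Ioi (0 : ℝ),
        x ^ β * (x - a) / ((x ^ 3 + a ^ 3) * (x ^ 2 - b * x + b ^ 2)) =
      2 * Real.pi / (3 * (a ^ 3 - b ^ 3)) * (Real.sin (Real.pi * (β - 1)))⁻¹ *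
        (Real.sqrt 3 * b ^ (β - 1) *
            (b * Real.sin (2 * Real.pi / 3 * (β + 1)) + a * Real.sin (2 * Real.pi / 3 * β))
          - a ^ (β - 1) *
            (b * Real.cos (2 * Real.pi / 3 * β) - a * Real.cos (2 * Real.pi / 3 * (β + 1)))
          - a ^ (β - 1) * (a - b)) := by
  have hpt : ∀ x ∈ Ioi (0:ℝ), x ^ β * (x - a) / ((x ^ 3 + a ^ 3) * (x ^ 2 - b * x + b ^ 2))
      = x ^ (β+3-1) / ((x ^ (3:ℕ) + a ^ (3:ℕ)) * (x ^ (3:ℕ) + b ^ (3:ℕ)))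
        + ((b - a) * (x ^ (β+2-1) / ((x ^ (3:ℕ) + a ^ (3:ℕ)) * (x ^ (3:ℕ) + b ^ (3:ℕ))))
          + (-(a*b)) * (x ^ (β+1-1) / ((x ^ (3:ℕ) + a ^ (3:ℕ)) * (x ^ (3:ℕ) + b ^ (3:ℕ))))) := by
    intro x hx
    have hx0 : (0:ℝ) < x := hx
    have e0 : x ^ (β+3-1) = x ^ β * x ^ (2:ℕ) := by
      rw [show β+3-1 = β + ((2:ℕ):ℝ) by push_cast; ring, rpow_add hx0, rpow_natCast]
    have e1 : x ^ (β+2-1) = x ^ β * x := by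
      rw [show β+2-1 = β + 1 by ring, rpow_add hx0, rpow_one]
    have e2 : x ^ (β+1-1) = x ^ β := by rw [show β+1-1 = β by ring]
    have hq : (0:ℝ) < x ^ 2 - b * x + b ^ 2 := by nlinarith [sq_nonneg (x - b), sq_nonneg b, sq_nonneg x]
    have hA : (0:ℝ) < x ^ (3:ℕ) + a ^ (3:ℕ) := by positivity
    have hB : (0:ℝ) < x ^ (3:ℕ) + b ^ (3:ℕ) := by positivity
    rw [e0, e1, e2]
    have hq' : x ^ 2 - b * x + b ^ 2 ≠ 0 := hq.ne'
    rw [show x ^ (3:ℕ) + b ^ (3:ℕ) = (x + b) * (x ^ 2 - b * x + b ^ 2) by ring]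
    field_simp
    ring
  rw [setIntegral_congr_fun measurableSet_Ioi hpt]
  have i1 := int_two (s := β+3) ha hb (by linarith) (by linarith)
  have i2 := int_two (s := β+2) ha hb (by linarith) (by linarith)
  have i3 := int_two (s := β+1) ha hb (by linarith) (by linarith)
  have i2' : IntegrableOn
      (fun x : ℝ => (b-a) * (x ^ (β+2-1) / ((x ^ (3:ℕ) + a ^ (3:ℕ)) * (x ^ (3:ℕ) + b ^ (3:ℕ)))))
      (Ioi (0:ℝ)) := i2.const_mul (b-a)
  have i3' : IntegrableOn
      (fun x : ℝ => (-(a*b)) * (x ^ (β+1-1) / ((x ^ (3:ℕ) + a ^ (3:ℕ)) * (x ^ (3:ℕ) + b ^ (3:ℕ)))))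
      (Ioi (0:ℝ)) := i3.const_mul (-(a*b))
  have i23 : IntegrableOn
      (fun x : ℝ => (b-a) * (x ^ (β+2-1) / ((x ^ (3:ℕ) + a ^ (3:ℕ)) * (x ^ (3:ℕ) + b ^ (3:ℕ))))
        + (-(a*b)) * (x ^ (β+1-1) / ((x ^ (3:ℕ) + a ^ (3:ℕ)) * (x ^ (3:ℕ) + b ^ (3:ℕ)))))
      (Ioi (0:ℝ)) := i2'.add i3'
  rw [integral_add i1 i23, integral_add i2' i3', MeasureTheory.integral_const_mul, MeasureTheory.integral_const_mul]
  rw [Kval ha hb hab (by linarith) (by linarith) (by intro h3; exact h0 (by linarith)),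
    Kval ha hb hab (by linarith) (by linarith) (by intro h3; exact h1 (by linarith)),
    Kval ha hb hab (by linarith) (by linarith) (by intro h3; exact h2 (by linarith))]
  set s := Real.sin (π*β/3) with hs_def
  set c := Real.cos (π*β/3) with hc_def
  set t := Real.sqrt 3 with ht_def
  have hsc : s^2 + c^2 = 1 := Real.sin_sq_add_cos_sq _
  have ht : t^2 = 3 := Real.sq_sqrt (by norm_num)
  have s23 : Real.sin (2*π/3) = t/2 := by
    rw [show 2*π/3 = π - π/3 by ring, Real.sin_pi_sub, Real.sin_pi_div_three]
  have c23 : Real.cos (2*π/3) = -(1/2) := by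
    rw [show 2*π/3 = π - π/3 by ring, Real.cos_pi_sub, Real.cos_pi_div_three]
  have E3 : Real.sin (π * (β+3) / 3) = -s := by
    rw [show π*(β+3)/3 = π*β/3 + π by ring, Real.sin_add_pi, hs_def]
  have E2 : Real.sin (π * (β+2) / 3) = (t*c - s)/2 := by
    rw [show π*(β+2)/3 = π*β/3 + 2*π/3 by ring, Real.sin_add, s23, c23]
    ring
  have E1 : Real.sin (π * (β+1) / 3) = (s + t*c)/2 := by
    rw [show π*(β+1)/3 = π*β/3 + π/3 by ring, Real.sin_add, Real.sin_pi_div_three,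
      Real.cos_pi_div_three, ht_def]
    ring
  have ER : Real.sin (π * (β-1)) = -(s*(s+t*c)*(t*c-s)) := by
    rw [show π*(β-1) = π*β - π by ring, Real.sin_sub_pi, show π*β = 3*(π*β/3) by ring,
      Real.sin_three_mul]
    linear_combination (s*c^2)*ht + (3*s)*hsc
  have ESb : Real.sin (2*π/3*β) = 2*(s*c) := by
    rw [show 2*π/3*β = 2*(π*β/3) by ring, Real.sin_two_mul]
    ring
  have ECb : Real.cos (2*π/3*β) = c^2 - s^2 := by
    rw [show 2*π/3*β = 2*(π*β/3) by ring, Real.cos_two_mul']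
  have ES2 : Real.sin (2*π/3*(β+1)) = -(s*c) + t*(c^2-s^2)/2 := by
    rw [show 2*π/3*(β+1) = 2*(π*β/3) + 2*π/3 by ring, Real.sin_add, Real.sin_two_mul,
      Real.cos_two_mul', s23, c23]
    ring
  have EC2 : Real.cos (2*π/3*(β+1)) = -(c^2-s^2)/2 - t*s*c := by
    rw [show 2*π/3*(β+1) = 2*(π*β/3) + 2*π/3 by ring, Real.cos_add, Real.sin_two_mul,
      Real.cos_two_mul', s23, c23]
    ring
  have Pa3 : a ^ (β+3-3) = a ^ (β-1) * a := by
    rw [show β+3-3 = (β-1) + 1 by ring, rpow_add ha, rpow_one]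
  have Pb3 : b ^ (β+3-3) = b ^ (β-1) * b := by
    rw [show β+3-3 = (β-1) + 1 by ring, rpow_add hb, rpow_one]
  have Pa1 : a ^ (β+1-3) = a ^ (β-1) / a := by
    rw [show β+1-3 = (β-1) - 1 by ring, rpow_sub ha, rpow_one]
  have Pb1 : b ^ (β+1-3) = b ^ (β-1) / b := by
    rw [show β+1-3 = (β-1) - 1 by ring, rpow_sub hb, rpow_one]
  have hQ : b ^ (3:ℕ) - a ^ (3:ℕ) ≠ 0 := by
    rcases lt_or_gt_of_ne hab with h | h
    · exact ne_of_gt (by nlinarith [sq_nonneg (a+b), sq_nonneg (a-b), mul_pos ha hb])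
    · exact ne_of_lt (by nlinarith [sq_nonneg (a+b), sq_nonneg (a-b), mul_pos ha hb])
  have hs_ne : s ≠ 0 := by
    rcases lt_or_gt_of_ne h0 with h | h
    · have : Real.sin (π*β/3) < 0 := by
        apply Real.sin_neg_of_neg_of_neg_pi_lt
        · nlinarith [Real.pi_pos]
        · nlinarith [Real.pi_pos]
      exact ne_of_lt this
    · have : 0 < Real.sin (π*β/3) := by
        apply Real.sin_pos_of_pos_of_lt_pi
        · nlinarith [Real.pi_pos]
        · nlinarith [Real.pi_pos]
      exact ne_of_gt this
  have hS1_ne : s + t*c ≠ 0 := by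
    have hne : Real.sin (π * (β+1) / 3) ≠ 0 := by
      rcases lt_or_gt_of_ne h2 with h | h
      · apply ne_of_gt (Real.sin_pos_of_pos_of_lt_pi (by nlinarith [Real.pi_pos])
          (by nlinarith [Real.pi_pos]))
      · have hgt : Real.sin (π*(β+1)/3 - π) > 0 := by
          apply Real.sin_pos_of_pos_of_lt_pi
          · nlinarith [Real.pi_pos]
          · nlinarith [Real.pi_pos]
        rw [Real.sin_sub_pi] at hgt
        exact fun hzz => by rw [hzz] at hgt; norm_num at hgt
    rw [E1] at hne
    intro h
    exact hne (by rw [h]; norm_num)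
  have hS2_ne : t*c - s ≠ 0 := by
    have hne : Real.sin (π * (β+2) / 3) ≠ 0 := by
      rcases lt_or_gt_of_ne h1 with h | h
      · apply ne_of_gt (Real.sin_pos_of_pos_of_lt_pi (by nlinarith [Real.pi_pos])
          (by nlinarith [Real.pi_pos]))
      · have hgt : Real.sin (π*(β+2)/3 - π) > 0 := by
          apply Real.sin_pos_of_pos_of_lt_pi
          · nlinarith [Real.pi_pos]
          · nlinarith [Real.pi_pos]
        rw [Real.sin_sub_pi] at hgt
        exact fun hzz => by rw [hzz] at hgt; norm_num at hgt
    rw [E2] at hne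
    intro h
    exact hne (by rw [h]; norm_num)
  rw [E3, E2, E1, ER, ESb, ECb, ES2, EC2, Pa3, Pb3, Pa1, Pb1,
    show β+2-3 = β-1 by ring]
  linear_combination assemble s c t (a ^ (β-1)) (b ^ (β-1)) a b hsc ht hs_ne hS1_ne hS2_ne
    ha.ne' hb.ne' hQ
end

section
/- For every integer h ≥ 1, ∫₀¹ (log t)^{2h} · [ (1+t)/(1−t³) + (1−t)/(1+t³) ] dt = 2·(2h)!·(1 − 1/3^{2h+1})·(1 − 1/2^{2h+1})·ζ(2h+1), where ζ is the Riemann zeta function. -/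
open MeasureTheory

section aux
open Set Real

lemma image_exp_neg : (fun u : ℝ => Real.exp (-u)) '' Set.Ioi 0 = Set.Ioo 0 1 := by
  ext x
  constructor
  · rintro ⟨u, hu, rfl⟩
    exact ⟨Real.exp_pos _, Real.exp_lt_one_iff.mpr (by simpa using hu)⟩
  · rintro ⟨hx0, hx1⟩
    exact ⟨-Real.log x, by simpa using Real.log_neg hx0 hx1, by simp [Real.exp_log hx0]⟩

lemma deriv_exp_neg (u : ℝ) : HasDerivWithinAt (fun u : ℝ => Real.exp (-u))
    (-Real.exp (-u)) (Set.Ioi 0) u := by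
  have := (Real.hasDerivAt_exp (-u)).comp u (hasDerivAt_neg u)
  exact (this.congr_deriv (by ring)).hasDerivWithinAt

lemma injOn_exp_neg : Set.InjOn (fun u : ℝ => Real.exp (-u)) (Set.Ioi 0) := by
  intro a _ b _ hab
  have := Real.exp_injective hab
  linarith

lemma core_integrable (k m : ℕ) :
    IntegrableOn (fun t : ℝ => t ^ k * Real.log t ^ (2 * m)) (Set.Ioo 0 1) := by
  rw [← image_exp_neg,
    integrableOn_image_iff_integrableOn_abs_deriv_smul measurableSet_Ioi
      (fun u _ => deriv_exp_neg u) injOn_exp_neg]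
  have base : IntegrableOn (fun x : ℝ => Real.exp (-x) * x ^ ((2 * m + 1 : ℝ) - 1)) (Set.Ioi 0) :=
    Real.GammaIntegral_convergent (by positivity)
  refine MeasureTheory.Integrable.mono base ?_ ?_
  · apply Continuous.aestronglyMeasurable
    continuity
  · filter_upwards [ae_restrict_mem measurableSet_Ioi] with u hu
    have hu0 : (0:ℝ) < u := hu
    have h1 : |(-Real.exp (-u))| = Real.exp (-u) := by
      rw [abs_neg, abs_of_pos (Real.exp_pos _)]
    rw [Real.norm_eq_abs, Real.norm_eq_abs, smul_eq_mul]
    have h2 : Real.exp (-u) * (Real.exp (-u) ^ k * Real.log (Real.exp (-u)) ^ (2*m))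
        ≤ Real.exp (-u) * u ^ ((2 * m + 1 : ℝ) - 1) := by
      rw [Real.log_exp]
      have hpow : (-u) ^ (2*m) = u ^ (2*m) := (even_two_mul m).neg_pow u
      rw [hpow]
      have : u ^ ((2 * m + 1 : ℝ) - 1) = u ^ (2*m) := by
        rw [show (2 * m + 1 : ℝ) - 1 = ((2*m : ℕ) : ℝ) by push_cast; ring,
          Real.rpow_natCast]
      rw [this]
      have he : Real.exp (-u) ^ k ≤ 1 := by
        apply pow_le_one₀ (Real.exp_pos _).le
        exact Real.exp_le_one_iff.mpr (by linarith)
      have h3 : Real.exp (-u) ^ k * u ^ (2*m) ≤ u ^ (2*m) :=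
        mul_le_of_le_one_left (pow_nonneg hu0.le _) he
      exact mul_le_mul_of_nonneg_left h3 (Real.exp_pos _).le
    rw [h1]
    have hnn : 0 ≤ Real.exp (-u) * (Real.exp (-u) ^ k * Real.log (Real.exp (-u)) ^ (2*m)) := by
      have hl := (even_two_mul m).pow_nonneg (Real.log (Real.exp (-u)))
      positivity
    rw [abs_of_nonneg hnn]
    exact h2.trans (le_abs_self _)

lemma core_integral (k m : ℕ) :
    ∫ t in Set.Ioo (0:ℝ) 1, t ^ k * Real.log t ^ (2 * m)
      = (2*m).factorial / (k+1 : ℝ) ^ (2*m+1) := by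
  rw [← image_exp_neg,
    integral_image_eq_integral_abs_deriv_smul measurableSet_Ioi
      (fun u _ => deriv_exp_neg u) injOn_exp_neg]
  have key : ∫ u in Set.Ioi (0:ℝ),
      |(-Real.exp (-u))| • ((Real.exp (-u)) ^ k * Real.log (Real.exp (-u)) ^ (2*m))
      = ∫ u in Set.Ioi (0:ℝ), u ^ ((2*m+1:ℝ) - 1) * Real.exp (-((k+1:ℝ) * u)) := by
    apply setIntegral_congr_fun measurableSet_Ioi
    intro u hu
    have hu0 : (0:ℝ) < u := hu
    dsimp only
    rw [smul_eq_mul, abs_neg, abs_of_pos (Real.exp_pos _), Real.log_exp,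
      (even_two_mul m).neg_pow u,
      show (2 * m + 1 : ℝ) - 1 = ((2*m : ℕ) : ℝ) by push_cast; ring, Real.rpow_natCast,
      ← Real.exp_nat_mul]
    rw [show Real.exp (-u) * (Real.exp ((k:ℝ) * -u) * u ^ (2*m))
        = u ^ (2*m) * (Real.exp ((k:ℝ) * -u) * Real.exp (-u)) from by ring, ← Real.exp_add]
    congr 2
    ring
  rw [key, Real.integral_rpow_mul_exp_neg_mul_Ioi (by positivity) (by positivity)]
  have hg : Real.Gamma (2*(m:ℝ)+1) = (2*m).factorial := by
    rw [show (2*(m:ℝ)+1) = ((2*m : ℕ):ℝ)+1 by push_cast; ring, Real.Gamma_nat_eq_factorial]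
  rw [hg, show (2*(m:ℝ)+1) = ((2*m+1 : ℕ):ℝ) by push_cast; ring, Real.rpow_natCast,
    div_pow, one_pow]
  ring

end aux

lemma hasSum_mod {d : ℕ} [NeZero d] {g : ℕ → ℝ} {a : ℝ} (hg : HasSum g a) :
    HasSum (fun k => ∑ j : Fin d, g (k * d + (j : ℕ))) a :=
  ((Nat.divModEquiv d).symm.hasSum_iff.mpr hg).prod_fiberwise (fun _ => hasSum_fintype _)

lemma key_sum (s : ℕ) (hs : 2 ≤ s) :
    HasSum (fun k : ℕ => 1/(((6*k+1:ℕ)):ℝ)^s + 1/(((6*k+5:ℕ)):ℝ)^s)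
      ((1 - 1/3^s) * (1 - 1/2^s) * ∑' n : ℕ, 1/(n:ℝ)^s) := by
  set f : ℕ → ℝ := fun n => 1 / (n:ℝ)^s with hfdef
  have hf : Summable f := Real.summable_one_div_nat_pow.mpr (by omega)
  set Z : ℝ := ∑' n, f n with hZ
  have hmul : ∀ c n : ℕ, f (c * n) = 1/(c:ℝ)^s * f n := by
    intro c n
    simp only [hfdef]
    push_cast
    rw [mul_pow, one_div, one_div, one_div, mul_inv]
  have hSj : ∀ j : ℕ, Summable (fun k => f (6*k+j)) :=
    fun j => hf.comp_injective (fun a b hab => by omega)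
  -- A : full sum grouped mod 6
  have A : HasSum (fun k => f (6*k) + f (6*k+1) + f (6*k+2) + f (6*k+3) + f (6*k+4) + f (6*k+5))
      Z := by
    have := hasSum_mod (d := 6) hf.hasSum
    rw [show (fun k => ∑ j : Fin 6, f (k * 6 + (j:ℕ)))
        = (fun k => f (6*k) + f (6*k+1) + f (6*k+2) + f (6*k+3) + f (6*k+4) + f (6*k+5)) from
      funext fun k => by
        rw [Fin.sum_univ_six]
        rw [show ((0:Fin 6):ℕ) = 0 from rfl, show ((1:Fin 6):ℕ) = 1 from rfl,
          show ((2:Fin 6):ℕ) = 2 from rfl, show ((3:Fin 6):ℕ) = 3 from rfl,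
          show ((4:Fin 6):ℕ) = 4 from rfl, show ((5:Fin 6):ℕ) = 5 from rfl, Nat.add_zero]
        rw [show k*6 = 6*k from by ring]] at this
    exact this
  -- B : even sum grouped
  have B0 : HasSum (fun k => f (2*k)) (1/2^s * Z) := by
    rw [show (fun k => f (2*k)) = (fun k => 1/(2:ℝ)^s * f k) from funext fun k => by
      rw [hmul 2 k]; norm_num]
    exact hf.hasSum.mul_left _
  have B : HasSum (fun k => f (6*k) + f (6*k+2) + f (6*k+4)) (1/2^s * Z) := by
    have := hasSum_mod (d := 3) B0
    rw [show (fun k => ∑ j : Fin 3, f (2 * (k * 3 + (j:ℕ))))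
        = (fun k => f (6*k) + f (6*k+2) + f (6*k+4)) from
      funext fun k => by
        rw [Fin.sum_univ_three]
        rw [show ((0:Fin 3):ℕ) = 0 from rfl, show ((1:Fin 3):ℕ) = 1 from rfl,
          show ((2:Fin 3):ℕ) = 2 from rfl, Nat.add_zero]
        rw [show 2*(k*3) = 6*k from by ring, show 2*(k*3+1) = 6*k+2 from by ring,
          show 2*(k*3+2) = 6*k+4 from by ring]] at this
    exact this
  have C0 : HasSum (fun k => f (3*k)) (1/3^s * Z) := by
    rw [show (fun k => f (3*k)) = (fun k => 1/(3:ℝ)^s * f k) from funext fun k => by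
      rw [hmul 3 k]; norm_num]
    exact hf.hasSum.mul_left _
  have C : HasSum (fun k => f (6*k) + f (6*k+3)) (1/3^s * Z) := by
    have := hasSum_mod (d := 2) C0
    rw [show (fun k => ∑ j : Fin 2, f (3 * (k * 2 + (j:ℕ))))
        = (fun k => f (6*k) + f (6*k+3)) from
      funext fun k => by
        rw [Fin.sum_univ_two]
        rw [show ((0:Fin 2):ℕ) = 0 from rfl, show ((1:Fin 2):ℕ) = 1 from rfl, Nat.add_zero]
        rw [show 3*(k*2) = 6*k from by ring, show 3*(k*2+1) = 6*k+3 from by ring]] at this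
    exact this
  have D : HasSum (fun k => f (6*k)) (1/6^s * Z) := by
    rw [show (fun k => f (6*k)) = (fun k => 1/(6:ℝ)^s * f k) from funext fun k => by
      rw [hmul 6 k]; norm_num]
    exact hf.hasSum.mul_left _
  have T : HasSum (fun k => f (6*k+1) + f (6*k+5))
      ((∑' k, f (6*k+1)) + ∑' k, f (6*k+5)) := (hSj 1).hasSum.add (hSj 5).hasSum
  have combo := ((T.add B).add C).sub D
  have hfun : (fun k => (f (6*k+1) + f (6*k+5)) + (f (6*k) + f (6*k+2) + f (6*k+4))
      + (f (6*k) + f (6*k+3)) - f (6*k))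
      = (fun k => f (6*k) + f (6*k+1) + f (6*k+2) + f (6*k+3) + f (6*k+4) + f (6*k+5)) :=
    funext fun k => by ring
  rw [hfun] at combo
  have huniq := combo.unique A
  have h6s : (1/6^s : ℝ) = 1/2^s * 1/3^s := by
    rw [mul_one, div_div, ← mul_pow]
    norm_num
  have hval : (∑' k, f (6*k+1)) + ∑' k, f (6*k+5) = (1 - 1/3^s) * (1 - 1/2^s) * Z := by
    rw [h6s] at huniq
    have h1 : (∑' k, f (6*k+1)) + ∑' k, f (6*k+5)
        = Z - 1/2^s*Z - 1/3^s*Z + 1/2^s * 1/3^s * Z := by linarith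
    rw [h1]; ring
  have : (fun k : ℕ => 1/(((6*k+1:ℕ)):ℝ)^s + 1/(((6*k+5:ℕ)):ℝ)^s)
      = (fun k => f (6*k+1) + f (6*k+5)) := rfl
  rw [this]
  exact hval ▸ T

/-- `∫₀¹ log^{2h}t [(1+t)/(1−t³) + (1−t)/(1+t³)] dt
= 2(2h)!(1 − 3^{−(2h+1)})(1 − 2^{−(2h+1)}) ζ(2h+1)` for `h ≥ 1`. -/
theorem integral_log_pow_even (h : ℕ) (hh : 1 ≤ h) :
    ((∫ t in Set.Ioo (0 : ℝ) 1,
        Real.log t ^ (2 * h) * ((1 + t) / (1 - t ^ 3) + (1 - t) / (1 + t ^ 3))) : ℂ) =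
      2 * (Nat.factorial (2 * h) : ℂ) * (1 - 1 / 3 ^ (2 * h + 1)) * (1 - 1 / 2 ^ (2 * h + 1)) *
        riemannZeta (2 * (h : ℂ) + 1) := by
  set s : ℕ := 2 * h + 1 with hsdef
  have hs2 : 2 ≤ s := by omega
  set Z : ℝ := ∑' n : ℕ, 1/(n:ℝ)^s with hZ
  set F : ℕ → ℝ → ℝ := fun n t =>
    2 * (t ^ (6*n) * Real.log t ^ (2*h)) + 2 * (t ^ (6*n+4) * Real.log t ^ (2*h)) with hF
  -- pointwise sum of the series
  have HS : ∀ t ∈ Set.Ioo (0:ℝ) 1, HasSum (fun n => F n t)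
      (Real.log t ^ (2*h) * ((1 + t) / (1 - t ^ 3) + (1 - t) / (1 + t ^ 3))) := by
    intro t ht
    obtain ⟨ht0, ht1⟩ := ht
    have hr : t ^ 6 < 1 := pow_lt_one₀ ht0.le ht1 (by norm_num)
    have G := hasSum_geometric_of_lt_one (by positivity) hr
    have H1 := (G.mul_left (2 * Real.log t ^ (2*h))).add
      (G.mul_left (2 * t^4 * Real.log t ^ (2*h)))
    have hfun : (fun n => 2 * Real.log t ^ (2*h) * (t^6)^n
        + 2 * t^4 * Real.log t ^ (2*h) * (t^6)^n) = fun n => F n t := by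
      funext n
      simp only [hF]
      rw [pow_add, pow_mul]
      ring
    rw [hfun] at H1
    have h3 : (1:ℝ) - t^3 ≠ 0 := by
      have : t^3 < 1 := pow_lt_one₀ ht0.le ht1 (by norm_num)
      linarith
    have h3' : (1:ℝ) + t^3 ≠ 0 := by positivity
    have h6 : (1:ℝ) - t^6 ≠ 0 := by linarith
    have hval : 2 * Real.log t ^ (2*h) * (1 - t^6)⁻¹ + 2 * t^4 * Real.log t ^ (2*h) * (1-t^6)⁻¹
        = Real.log t ^ (2*h) * ((1 + t) / (1 - t ^ 3) + (1 - t) / (1 + t ^ 3)) := by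
      field_simp
      ring
    rwa [hval] at H1
  -- integrability of each term
  have hint : ∀ n : ℕ, IntegrableOn (F n) (Set.Ioo (0:ℝ) 1) := fun n =>
    ((core_integrable (6*n) h).const_mul 2).add ((core_integrable (6*n+4) h).const_mul 2)
  -- each term's integral
  have hFnn : ∀ (n : ℕ) (t : ℝ), 0 ≤ F n t := by
    intro n t
    have e1 : (0:ℝ) ≤ t ^ (6*n) := (Even.pow_nonneg ⟨3*n, by ring⟩ t : _)
    have e2 : (0:ℝ) ≤ t ^ (6*n+4) := (Even.pow_nonneg ⟨3*n+2, by ring⟩ t : _)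
    have e3 : (0:ℝ) ≤ Real.log t ^ (2*h) := Even.pow_nonneg (even_two_mul h) _
    simp only [hF]
    positivity
  set W : ℕ → ℝ := fun n =>
    2 * (2*h).factorial * (1/(((6*n+1:ℕ)):ℝ)^s + 1/(((6*n+5:ℕ)):ℝ)^s) with hW
  have hVn : ∀ n : ℕ, ∫ t in Set.Ioo (0:ℝ) 1, F n t = W n := by
    intro n
    simp only [hF]
    rw [integral_add ((core_integrable (6*n) h).const_mul 2)
      ((core_integrable (6*n+4) h).const_mul 2), integral_const_mul, integral_const_mul,
      core_integral (6*n) h, core_integral (6*n+4) h]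
    simp only [hW, hsdef]
    push_cast
    ring
  have hWsum : Summable W := ((key_sum s hs2).summable.mul_left (2 * (2*h).factorial : ℝ))
  have hnorm : ∀ n : ℕ, (∫ t in Set.Ioo (0:ℝ) 1, ‖F n t‖) = W n := by
    intro n
    rw [show (fun t => ‖F n t‖) = F n from funext fun t => Real.norm_of_nonneg (hFnn n t)]
    exact hVn n
  -- swap integral and sum
  have swap : (∫ t in Set.Ioo (0:ℝ) 1,
      Real.log t ^ (2 * h) * ((1 + t) / (1 - t ^ 3) + (1 - t) / (1 + t ^ 3)))
      = ∑' n : ℕ, ∫ t in Set.Ioo (0:ℝ) 1, F n t := by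
    have e1 : (∫ t in Set.Ioo (0:ℝ) 1,
        Real.log t ^ (2 * h) * ((1 + t) / (1 - t ^ 3) + (1 - t) / (1 + t ^ 3)))
        = ∫ t in Set.Ioo (0:ℝ) 1, ∑' n : ℕ, F n t :=
      setIntegral_congr_fun measurableSet_Ioo fun t ht => ((HS t ht).tsum_eq).symm
    exact e1.trans (MeasureTheory.integral_tsum_of_summable_integral_norm hint
      (by rw [show (fun n => ∫ t in Set.Ioo (0:ℝ) 1, ‖F n t‖) = W from funext hnorm]
          exact hWsum)).symm
  have R : (∫ t in Set.Ioo (0:ℝ) 1,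
      Real.log t ^ (2 * h) * ((1 + t) / (1 - t ^ 3) + (1 - t) / (1 + t ^ 3)))
      = 2 * (2*h).factorial * ((1 - 1/3^s) * (1 - 1/2^s) * Z) := by
    rw [swap, show (fun n : ℕ => ∫ t in Set.Ioo (0:ℝ) 1, F n t) = W from funext hVn, hW]
    rw [tsum_mul_left, (key_sum s hs2).tsum_eq]
  have hzeta : riemannZeta (2 * (h:ℂ) + 1) = (Z : ℂ) := by
    rw [show (2 * (h:ℂ) + 1) = ((s:ℕ):ℂ) by rw [hsdef]; push_cast; ring,
      zeta_nat_eq_tsum_of_gt_one (by omega), hZ, Complex.ofReal_tsum]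
    exact tsum_congr fun n => by push_cast; ring
  have cast1 : (∫ t in Set.Ioo (0 : ℝ) 1,
      ((Real.log t : ℂ) ^ (2 * h) * ((1 + (t:ℂ)) / (1 - (t:ℂ) ^ 3) + (1 - (t:ℂ)) / (1 + (t:ℂ) ^ 3))))
      = Complex.ofReal (∫ t in Set.Ioo (0 : ℝ) 1,
        Real.log t ^ (2 * h) * ((1 + t) / (1 - t ^ 3) + (1 - t) / (1 + t ^ 3)) : ℝ) := by
    have e2 : (∫ t in Set.Ioo (0:ℝ) 1,
        ((Real.log t ^ (2*h) * ((1 + t) / (1 - t ^ 3) + (1 - t) / (1 + t ^ 3)) : ℝ) : ℂ))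
        = Complex.ofReal (∫ t in Set.Ioo (0 : ℝ) 1,
          Real.log t ^ (2 * h) * ((1 + t) / (1 - t ^ 3) + (1 - t) / (1 + t ^ 3)) : ℝ) :=
      integral_ofReal
    rw [← e2]
    exact integral_congr_ae (Filter.Eventually.of_forall fun t => by push_cast; ring)
  rw [cast1, R, hzeta, hsdef]
  push_cast
  ring
end

section
/- For every integer h ≥ 0, ∫₀¹ (log t)^{2h+1} · [ 1/(t²+t+1) + 1/(t²−t+1) ] dt = −2·(2h+1)!·(1 + 1/2^{2h+2})·L(χ_{−3}, 2h+2), where L(χ_{−3}, s) denotes the Dirichlet L-function of the unique nontrivial Dirichlet character χ_{−3} modulo 3 (χ_{−3}(n)=1 if n≡1 mod 3, −1 if n≡2 mod 3, 0 otherwise). -/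
open MeasureTheory

/-- `χ_{−3}`, the nontrivial character modulo 3, as a real-valued function on `ℕ`. -/
def chi3R (n : ℕ) : ℝ := if n % 3 = 1 then 1 else if n % 3 = 2 then -1 else 0

section Helpers
open Set Real


lemma gamma_int (m : ℕ) {c : ℝ} (hc : 0 < c) :
    ∫ x in Set.Ioi (0:ℝ), x ^ m * Real.exp (-(c * x)) = m.factorial / c ^ (m + 1) := by
  have h := Real.integral_rpow_mul_exp_neg_mul_Ioi (a := (m:ℝ) + 1) (r := c)
    (by positivity) hc
  rw [setIntegral_congr_fun measurableSet_Ioi (fun x hx => ?_) ] at h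
  · rw [h, Real.Gamma_nat_eq_factorial,
      show ((m:ℝ)+1) = ((m+1:ℕ):ℝ) by push_cast; ring, Real.rpow_natCast, div_pow, one_pow]; ring
  · show x ^ ((m:ℝ) + 1 - 1) * Real.exp (-(c * x)) = x ^ m * Real.exp (-(c * x))
    rw [add_sub_cancel_right, Real.rpow_natCast]

lemma key_fun (n m : ℕ) (x : ℝ) :
    Real.exp (-x) * ((Real.exp (-x)) ^ n * Real.log (Real.exp (-x)) ^ m)
      = (-1:ℝ)^m * (x ^ m * Real.exp (-(((n:ℝ)+1) * x))) := by
  rw [Real.log_exp]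
  have e : Real.exp (-(((n:ℝ)+1) * x)) = Real.exp (-x) * Real.exp (-x) ^ n := by
    rw [← Real.exp_nat_mul, ← Real.exp_add]; congr 1; ring
  rw [e, neg_pow]; ring

lemma gamma_integrable (m : ℕ) {c : ℝ} (hc : 0 < c) :
    IntegrableOn (fun x : ℝ => x ^ m * Real.exp (-(c * x))) (Set.Ioi 0) := by
  have h := integrableOn_rpow_mul_exp_neg_mul_rpow (p := 1) (s := (m:ℝ)) (b := c)
    (lt_of_lt_of_le (by norm_num) (Nat.cast_nonneg m)) one_pos hc
  refine h.congr_fun (fun x hx => ?_) measurableSet_Ioi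
  beta_reduce
  rw [Real.rpow_one, Real.rpow_natCast]
  ring_nf

lemma expNeg_image : (fun x : ℝ => Real.exp (-x)) '' Set.Ioi 0 = Set.Ioo 0 1 := by
  ext y
  constructor
  · rintro ⟨x, hx, rfl⟩
    exact ⟨Real.exp_pos _, by simp only []; rw [Real.exp_lt_one_iff]; simpa using Set.mem_Ioi.mp hx⟩
  · rintro ⟨hy0, hy1⟩
    exact ⟨-Real.log y, by simpa using Real.log_neg hy0 hy1, by simp [Real.exp_log hy0]⟩

lemma expNeg_deriv (x : ℝ) : HasDerivAt (fun x : ℝ => Real.exp (-x)) (-Real.exp (-x)) x := by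
  simpa using (hasDerivAt_neg x).exp

lemma expNeg_inj : Set.InjOn (fun x : ℝ => Real.exp (-x)) (Set.Ioi 0) :=
  (Real.exp_injective.comp neg_injective).injOn

lemma subst_eq (g : ℝ → ℝ) :
    ∫ t in Set.Ioo (0:ℝ) 1, g t = ∫ x in Set.Ioi (0:ℝ), Real.exp (-x) * g (Real.exp (-x)) := by
  rw [← expNeg_image, integral_image_eq_integral_abs_deriv_smul measurableSet_Ioi
    (fun x _ => (expNeg_deriv x).hasDerivWithinAt) expNeg_inj g]
  simp [abs_of_pos (Real.exp_pos _), smul_eq_mul]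

lemma subst_integrable (g : ℝ → ℝ)
    (hg : IntegrableOn (fun x => Real.exp (-x) * g (Real.exp (-x))) (Set.Ioi 0)) :
    IntegrableOn g (Set.Ioo (0:ℝ) 1) := by
  rw [← expNeg_image, integrableOn_image_iff_integrableOn_abs_deriv_smul measurableSet_Ioi
    (fun x _ => (expNeg_deriv x).hasDerivWithinAt) expNeg_inj g]
  refine hg.congr_fun (fun x _ => ?_) measurableSet_Ioi
  simp [abs_of_pos (Real.exp_pos _), smul_eq_mul]

lemma mono_int (n m : ℕ) :
    ∫ t in Set.Ioo (0:ℝ) 1, t ^ n * Real.log t ^ m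
      = (-1:ℝ)^m * m.factorial / ((n:ℝ)+1)^(m+1) := by
  rw [subst_eq (fun t => t ^ n * Real.log t ^ m),
    setIntegral_congr_fun measurableSet_Ioi (fun x _ => key_fun n m x),
    integral_const_mul, gamma_int m (by positivity : (0:ℝ) < (n:ℝ)+1)]
  ring

lemma mono_integrable (n m : ℕ) :
    IntegrableOn (fun t : ℝ => t ^ n * Real.log t ^ m) (Set.Ioo 0 1) := by
  apply subst_integrable
  exact IntegrableOn.congr_fun ((gamma_integrable m (by positivity : (0:ℝ) < (n:ℝ)+1)).const_mul
    ((-1:ℝ)^m)) (fun x _ => (key_fun n m x).symm) measurableSet_Ioi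

lemma mono_norm_int (n m : ℕ) :
    ∫ t in Set.Ioo (0:ℝ) 1, ‖t ^ n * Real.log t ^ m‖
      = (m.factorial : ℝ) / ((n:ℝ)+1)^(m+1) := by
  rw [setIntegral_congr_fun measurableSet_Ioo
      (fun t ht => show ‖t ^ n * Real.log t ^ m‖ = (-1:ℝ)^m * (t ^ n * Real.log t ^ m) by
        rw [Real.norm_eq_abs, abs_mul, abs_pow, abs_pow, abs_of_pos ht.1,
          abs_of_neg (Real.log_neg ht.1 ht.2), neg_pow]; ring),
    integral_const_mul, mono_int, ← mul_div_assoc, ← mul_assoc, ← mul_pow]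
  norm_num

lemma summable_inv_pow (s : ℕ) (hs : 2 ≤ s) (f : ℕ → ℕ) (hf : ∀ k, k + 1 ≤ f k) :
    Summable (fun k : ℕ => 1 / ((f k : ℝ)) ^ s) := by
  have base : Summable (fun k : ℕ => 1 / ((k : ℝ) + 1) ^ 2) := by
    have h1 : Summable (fun n : ℕ => 1 / (n : ℝ) ^ 2) :=
      Real.summable_one_div_nat_pow.mpr one_lt_two
    have := (summable_nat_add_iff 1).mpr h1
    refine this.congr fun k => ?_
    push_cast
    ring
  refine Summable.of_nonneg_of_le (fun k => by positivity) (fun k => ?_) base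
  have h1 : (0:ℝ) < ((k:ℝ)+1)^2 := by positivity
  have h2 : ((k:ℝ)+1)^2 ≤ (f k : ℝ)^s := by
    have hk1 : ((k:ℝ)+1) ≤ (f k : ℝ) := by exact_mod_cast hf k
    calc ((k:ℝ)+1)^2 ≤ ((f k : ℝ))^2 := by gcongr <;> positivity
      _ ≤ ((f k : ℝ))^s := pow_le_pow_right₀ (by have := Nat.cast_nonneg (α := ℝ) k; linarith) hs
  exact one_div_le_one_div_of_le h1 h2

lemma pointwise_sum (m : ℕ) {t : ℝ} (ht : t ∈ Set.Ioo (0:ℝ) 1) :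
    Real.log t ^ m * (1 / (t ^ 2 + t + 1) + 1 / (t ^ 2 - t + 1))
      = ∑' k : ℕ, (t^6)^k * ((2 - 2*t^4) * Real.log t ^ m) := by
  obtain ⟨h0, h1⟩ := ht
  have p1 : (0:ℝ) < t^2 + t + 1 := by positivity
  have p2 : (0:ℝ) < t^2 - t + 1 := by nlinarith
  have h6 : t^6 < 1 := pow_lt_one₀ h0.le h1 (by norm_num)
  have p3 : (0:ℝ) < 1 - t^6 := by linarith
  rw [tsum_mul_right, tsum_geometric_of_lt_one (by positivity) h6]
  rw [div_add_div _ _ p1.ne' p2.ne', ← div_eq_inv_mul, mul_div_assoc',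
    div_eq_div_iff (mul_pos p1 p2).ne' p3.ne']
  ring

end Helpers

/-- `∫₀¹ log^{2h+1}t [1/(t²+t+1) + 1/(t²−t+1)] dt
= −2(2h+1)!(1 + 2^{−(2h+2)}) L(χ_{−3}, 2h+2)` for `h ≥ 0`,
where `L(χ_{−3}, s) = Σ_{n≥1} χ_{−3}(n)/n^s`. -/
theorem integral_log_pow_odd (h : ℕ) :
    ∫ t in Set.Ioo (0 : ℝ) 1,
        Real.log t ^ (2 * h + 1) * (1 / (t ^ 2 + t + 1) + 1 / (t ^ 2 - t + 1)) =
      -2 * (Nat.factorial (2 * h + 1) : ℝ) * (1 + 1 / 2 ^ (2 * h + 2)) *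
        ∑' n : ℕ, chi3R n / (n : ℝ) ^ (2 * h + 2) := by
  set m : ℕ := 2 * h + 1 with hm
  set s : ℕ := 2 * h + 2 with hs
  set M : ℝ := (m.factorial : ℝ) with hM
  have hMpos : (0:ℝ) < M := by rw [hM]; exact_mod_cast m.factorial_pos
  set b : ℕ → ℝ := fun j => 1 / (j : ℝ) ^ s with hb
  have hs2 : 2 ≤ s := by omega
  have hmodd : (-1:ℝ) ^ m = -1 := Odd.neg_one_pow ⟨h, by omega⟩
  set F : ℕ → ℝ → ℝ := fun k t => (t^6)^k * ((2 - 2*t^4) * Real.log t ^ m) with hF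
  have hFeq : ∀ k, F k = fun t : ℝ =>
      2*(t^(6*k) * Real.log t ^ m) - 2*(t^(6*k+4) * Real.log t ^ m) := by
    intro k; funext t; simp only [hF, pow_add, pow_mul]; ring
  have hFint : ∀ k, IntegrableOn (F k) (Set.Ioo 0 1) := by
    intro k
    rw [hFeq k]
    exact ((mono_integrable (6*k) m).const_mul 2).sub ((mono_integrable (6*k+4) m).const_mul 2)
  have hFval : ∀ k, (∫ t in Set.Ioo (0:ℝ) 1, F k t) = -2 * M * (b (6*k+1) - b (6*k+5)) := by
    intro k
    rw [hFeq k]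
    rw [integral_sub ((mono_integrable (6*k) m).const_mul 2)
      ((mono_integrable (6*k+4) m).const_mul 2), integral_const_mul, integral_const_mul,
      mono_int, mono_int, hmodd]
    simp only [hb]
    push_cast
    ring
  have hnorm : ∀ k, (∫ t in Set.Ioo (0:ℝ) 1, ‖F k t‖) ≤ 4 * M / ((k:ℝ)+1)^2 := by
    intro k
    have hle : (∫ t in Set.Ioo (0:ℝ) 1, ‖F k t‖)
        ≤ ∫ t in Set.Ioo (0:ℝ) 1,
            (2 * ‖t^(6*k) * Real.log t ^ m‖ + 2 * ‖t^(6*k+4) * Real.log t ^ m‖) := by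
      refine setIntegral_mono_on (hFint k).norm ?_ measurableSet_Ioo (fun t ht => ?_)
      · exact ((mono_integrable (6*k) m).norm.const_mul 2).add
          ((mono_integrable (6*k+4) m).norm.const_mul 2)
      · rw [hFeq k]
        calc ‖2*(t^(6*k) * Real.log t ^ m) - 2*(t^(6*k+4) * Real.log t ^ m)‖
            ≤ ‖2*(t^(6*k) * Real.log t ^ m)‖ + ‖2*(t^(6*k+4) * Real.log t ^ m)‖ :=
              norm_sub_le _ _
          _ = 2 * ‖t^(6*k) * Real.log t ^ m‖ + 2 * ‖t^(6*k+4) * Real.log t ^ m‖ := by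
              simp [norm_mul]
    refine hle.trans ?_
    rw [integral_add ((mono_integrable (6*k) m).norm.const_mul 2)
      ((mono_integrable (6*k+4) m).norm.const_mul 2), integral_const_mul, integral_const_mul,
      mono_norm_int, mono_norm_int]
    have hk0 : (0:ℝ) ≤ (k:ℝ) := Nat.cast_nonneg k
    have d1 : ((k:ℝ)+1)^2 ≤ (((6*k:ℕ):ℝ)+1)^(m+1) := by
      push_cast
      calc ((k:ℝ)+1)^2 ≤ (6*(k:ℝ)+1)^2 := by gcongr <;> linarith
        _ ≤ (6*(k:ℝ)+1)^(m+1) := pow_le_pow_right₀ (by linarith) (by omega)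
    have d2 : ((k:ℝ)+1)^2 ≤ (((6*k+4:ℕ):ℝ)+1)^(m+1) := by
      push_cast
      calc ((k:ℝ)+1)^2 ≤ (6*(k:ℝ)+4+1)^2 := by gcongr <;> linarith
        _ ≤ (6*(k:ℝ)+4+1)^(m+1) := pow_le_pow_right₀ (by linarith) (by omega)
    have q1 : M / (((6*k:ℕ):ℝ)+1)^(m+1) ≤ M / ((k:ℝ)+1)^2 :=
      div_le_div_of_nonneg_left hMpos.le (by positivity) d1
    have q2 : M / (((6*k+4:ℕ):ℝ)+1)^(m+1) ≤ M / ((k:ℝ)+1)^2 :=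
      div_le_div_of_nonneg_left hMpos.le (by positivity) d2
    calc 2 * (M / (((6*k:ℕ):ℝ)+1)^(m+1)) + 2 * (M / (((6*k+4:ℕ):ℝ)+1)^(m+1))
        ≤ 2 * (M / ((k:ℝ)+1)^2) + 2 * (M / ((k:ℝ)+1)^2) := by gcongr
      _ = 4 * M / ((k:ℝ)+1)^2 := by ring
  have base2 : Summable (fun k : ℕ => 1 / ((k:ℝ)+1)^2) := by
    refine (summable_inv_pow 2 le_rfl (fun k => k + 1) (fun k => le_rfl)).congr fun k => ?_
    push_cast; ring
  have hsumnorm : Summable (fun k => ∫ t in Set.Ioo (0:ℝ) 1, ‖F k t‖) := by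
    refine Summable.of_nonneg_of_le (fun k => integral_nonneg fun t => norm_nonneg _) hnorm ?_
    refine ((base2.mul_left (4*M)).congr fun k => ?_)
    ring
  have hswap := integral_tsum_of_summable_integral_norm hFint hsumnorm
  rw [setIntegral_congr_fun measurableSet_Ioo (fun t ht => pointwise_sum m ht), ← hswap,
    tsum_congr hFval]
  -- summabilities
  have S1 : Summable (fun k => b (6*k+1)) := summable_inv_pow s hs2 _ (fun k => by omega)
  have S2 : Summable (fun k => b (6*k+2)) := summable_inv_pow s hs2 _ (fun k => by omega)
  have S4 : Summable (fun k => b (6*k+4)) := summable_inv_pow s hs2 _ (fun k => by omega)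
  have S5 : Summable (fun k => b (6*k+5)) := summable_inv_pow s hs2 _ (fun k => by omega)
  have T2 : Summable (fun k => b (12*k+2)) := summable_inv_pow s hs2 _ (fun k => by omega)
  have T4 : Summable (fun k => b (12*k+4)) := summable_inv_pow s hs2 _ (fun k => by omega)
  have T8 : Summable (fun k => b (12*k+8)) := summable_inv_pow s hs2 _ (fun k => by omega)
  have T10 : Summable (fun k => b (12*k+10)) := summable_inv_pow s hs2 _ (fun k => by omega)
  -- the L-function sum
  have hfb : ∀ n : ℕ, |chi3R n / (n:ℝ)^s| ≤ b n := by
    intro n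
    rcases Nat.eq_zero_or_pos n with rfl | hn
    · simp [chi3R, hb, zero_pow (by omega : s ≠ 0)]
    · have hnp : (0:ℝ) < (n:ℝ)^s := by positivity
      rw [abs_div, abs_of_pos hnp, hb]
      have hd : |chi3R n| ≤ 1 := by
        unfold chi3R
        split
        · norm_num
        · split <;> norm_num
      show |chi3R n| / (n:ℝ)^s ≤ 1 / (n:ℝ)^s
      gcongr
  have Sb : Summable b := by
    simp only [hb]
    exact Real.summable_one_div_nat_pow.mpr (by omega)
  have hLs : Summable (fun n : ℕ => chi3R n / (n:ℝ)^s) :=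
    (Summable.of_nonneg_of_le (fun n => abs_nonneg _) hfb Sb).of_abs
  have hL : (∑' n : ℕ, chi3R n / (n:ℝ)^s)
      = (∑' k, b (6*k+1)) - (∑' k, b (6*k+2)) + (∑' k, b (6*k+4)) - (∑' k, b (6*k+5)) := by
    set f : ℕ → ℝ := fun n => chi3R n / (n:ℝ)^s with hf
    have hp : Summable (f ∘ (Nat.divModEquiv 6).symm) :=
      (Equiv.summable_iff (Nat.divModEquiv 6).symm).mpr hLs
    calc (∑' n : ℕ, f n)
        = ∑' p : ℕ × Fin 6, f ((Nat.divModEquiv 6).symm p) :=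
          (Equiv.tsum_eq (Nat.divModEquiv 6).symm f).symm
      _ = ∑' (k : ℕ), ∑' (i : Fin 6), f ((Nat.divModEquiv 6).symm (k, i)) :=
          Summable.tsum_prod' hp (fun k => (hasSum_fintype _).summable)
      _ = ∑' (k : ℕ), (b (6*k+1) - b (6*k+2) + b (6*k+4) - b (6*k+5)) := by
          refine tsum_congr fun k => ?_
          rw [tsum_fintype]
          simp only [Nat.divModEquiv_symm_apply, Fin.sum_univ_six]
          simp only [show ((0:Fin 6):ℕ) = 0 from rfl, show ((1:Fin 6):ℕ) = 1 from rfl,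
            show ((2:Fin 6):ℕ) = 2 from rfl, show ((3:Fin 6):ℕ) = 3 from rfl,
            show ((4:Fin 6):ℕ) = 4 from rfl, show ((5:Fin 6):ℕ) = 5 from rfl, hf, hb]
          have e : ∀ c, (k*6+c) % 3 = c % 3 := fun c => by omega
          simp only [chi3R, e]
          norm_num
          push_cast
          ring
      _ = (∑' k, b (6*k+1)) - (∑' k, b (6*k+2)) + (∑' k, b (6*k+4)) - (∑' k, b (6*k+5)) := by
          rw [Summable.tsum_sub ((S1.sub S2).add S4) S5, Summable.tsum_add (S1.sub S2) S4, Summable.tsum_sub S1 S2]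
  rw [hL, tsum_mul_left, Summable.tsum_sub S1 S5]
  have hhalf : ∀ j : ℕ, (1/(2:ℝ)^s) * (∑' k, b (6*k+j)) = ∑' k, b (12*k+2*j) := by
    intro j
    rw [← tsum_mul_left]
    refine tsum_congr fun k => ?_
    show (1/(2:ℝ)^s) * (1/((6*k+j:ℕ):ℝ)^s) = 1/((12*k+2*j:ℕ):ℝ)^s
    push_cast
    rw [div_mul_div_comm, one_mul, ← mul_pow]
    congr 2
    ring
  have e1 := hhalf 1
  have e2 := hhalf 2
  have e4 := hhalf 4
  have e5 := hhalf 5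
  norm_num at e1 e2 e4 e5
  have p2 : (∑' k, b (12*k+2)) + (∑' k, b (12*k+8)) = ∑' k, b (6*k+2) := by
    have h := tsum_even_add_odd (f := fun k => b (6*k+2))
      (T2.congr fun k => congrArg b (by ring)) (T8.congr fun k => congrArg b (by ring))
    rw [tsum_congr (fun k => congrArg b (show 6*(2*k)+2 = 12*k+2 by ring)),
      tsum_congr (fun k => congrArg b (show 6*(2*k+1)+2 = 12*k+8 by ring))] at h
    exact h
  have p4 : (∑' k, b (12*k+4)) + (∑' k, b (12*k+10)) = ∑' k, b (6*k+4) := by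
    have h := tsum_even_add_odd (f := fun k => b (6*k+4))
      (T4.congr fun k => congrArg b (by ring)) (T10.congr fun k => congrArg b (by ring))
    rw [tsum_congr (fun k => congrArg b (show 6*(2*k)+4 = 12*k+4 by ring)),
      tsum_congr (fun k => congrArg b (show 6*(2*k+1)+4 = 12*k+10 by ring))] at h
    exact h
  linear_combination (2*M)*(e1 + e4 + p2) - (2*M)*(e2 + e5 + p4)
end

section
/- For every integer h ≥ 1, the derivative of the Riemann zeta function at the negative even integer −2h satisfies ζ'(−2h) = ((−1)^h (2h)! / 2^{2h+1}) · ζ(2h+1)/π^{2h}. -/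
open Complex Filter

/-- `ζ'(−2h) = ((−1)^h (2h)! / 2^{2h+1}) ζ(2h+1)/π^{2h}` for every integer `h ≥ 1`. -/
theorem deriv_riemannZeta_neg_even (h : ℕ) (hh : 1 ≤ h) :
    deriv riemannZeta (-(2 * (h : ℂ))) =
      ((-1) ^ h * (Nat.factorial (2 * h) : ℂ) / 2 ^ (2 * h + 1)) *
        riemannZeta (2 * (h : ℂ) + 1) / (Real.pi : ℂ) ^ (2 * h) := by
  have hpi : (Real.pi : ℂ) ≠ 0 := ofReal_ne_zero.mpr Real.pi_ne_zero
  set s₀ : ℂ := 2 * (h : ℂ) + 1 with hs₀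
  have hre : s₀.re = 2 * h + 1 := by simp [hs₀]
  have hre1 : 1 < s₀.re := by
    rw [hre]
    have : (1:ℝ) ≤ (h:ℝ) := by exact_mod_cast hh
    linarith
  -- functions
  set G : ℂ → ℂ := fun s => 2 * (2 * (Real.pi : ℂ)) ^ (-s) * Complex.Gamma s * riemannZeta s
    with hG
  set c : ℂ → ℂ := fun s => Complex.cos ((Real.pi : ℂ) * s / 2) with hc
  -- eventual equality near s₀
  have hev : (fun s => riemannZeta (1 - s)) =ᶠ[nhds s₀] fun s => G s * c s := by
    have hopen : IsOpen {s : ℂ | 1 < s.re} := isOpen_lt continuous_const continuous_re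
    filter_upwards [hopen.mem_nhds hre1] with s hs
    have hs1 : s ≠ 1 := by
      intro hcon; rw [hcon] at hs; simp at hs
    have hsn : ∀ n : ℕ, s ≠ -n := by
      intro n hcon
      rw [hcon] at hs
      simp only [Set.mem_setOf_eq, neg_re, natCast_re] at hs
      linarith [Nat.cast_nonneg (α := ℝ) n]
    rw [riemannZeta_one_sub hsn hs1, hG, hc]
    ring
  -- zeta is differentiable at -2h
  have hne1 : -(2 * (h : ℂ)) ≠ 1 := by
    intro hcon
    have := congrArg Complex.re hcon
    simp at this
    linarith [Nat.cast_nonneg (α := ℝ) h]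
  have hζ := (differentiableAt_riemannZeta hne1)
  -- derivative of LHS composite
  have hinner : HasDerivAt (fun s : ℂ => 1 - s) (-1) s₀ := by
    simpa using ((hasDerivAt_id s₀).const_sub 1)
  have h1s : (1 : ℂ) - s₀ = -(2 * (h : ℂ)) := by rw [hs₀]; ring
  have hcomp : HasDerivAt (fun s => riemannZeta (1 - s))
      (deriv riemannZeta (-(2 * (h : ℂ))) * (-1)) s₀ := by
    have hζ2 : DifferentiableAt ℂ riemannZeta ((1:ℂ) - s₀) := by rw [h1s]; exact hζ
    have := hζ2.hasDerivAt.comp s₀ hinner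
    rw [h1s] at this
    simpa [Function.comp_def] using this
  -- derivative of c
  have hinner2 : HasDerivAt (fun s : ℂ => (Real.pi : ℂ) * s / 2) ((Real.pi : ℂ) / 2) s₀ := by
    simpa using (((hasDerivAt_id s₀).const_mul (Real.pi : ℂ)).div_const 2)
  have hcder : HasDerivAt c (-Complex.sin ((Real.pi : ℂ) * s₀ / 2) * ((Real.pi : ℂ) / 2)) s₀ :=
    hinner2.ccos
  -- differentiability of G at s₀
  have hGdiff : DifferentiableAt ℂ G s₀ := by
    have hne1' : s₀ ≠ 1 := by
      intro hcon
      have := congrArg Complex.re hcon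
      rw [hre] at this; simp at this
      linarith [Nat.cast_nonneg (α := ℝ) h]
    have hsn : ∀ m : ℕ, s₀ ≠ -m := by
      intro m hcon
      have := congrArg Complex.re hcon
      rw [hre] at this; simp at this
      have : (0:ℝ) ≤ (m:ℝ) := Nat.cast_nonneg m
      linarith
    exact (((differentiableAt_const (2:ℂ)).mul
      (differentiableAt_id.neg.const_cpow (Or.inl (by
        norm_num [Real.pi_ne_zero])))).mul
      (Complex.differentiableAt_Gamma s₀ hsn)).mul (differentiableAt_riemannZeta hne1')
  -- key angle facts
  have hangle : (Real.pi : ℂ) * s₀ / 2 = (h : ℂ) * Real.pi + Real.pi / 2 := by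
    rw [hs₀]; ring
  have hcos0 : c s₀ = 0 := by
    rw [hc]
    simp only [hangle, Complex.cos_add_pi_div_two, Complex.sin_nat_mul_pi, neg_zero]
  have hsinval : Complex.sin ((Real.pi : ℂ) * s₀ / 2) = (-1) ^ h := by
    rw [hangle, Complex.sin_add_pi_div_two]
    have : Complex.cos ((h : ℂ) * Real.pi) = ((Real.cos (h * Real.pi) : ℝ) : ℂ) := by
      push_cast [Complex.ofReal_cos]; norm_num
    rw [this]
    have : Real.cos (h * Real.pi) = (-1) ^ h := by
      simpa using Real.cos_nat_mul_pi_sub 0 h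
    rw [this]; push_cast; ring
  -- deriv of RHS product at s₀
  have hF : deriv (fun s => G s * c s) s₀ = G s₀ * (-((-1:ℂ) ^ h) * ((Real.pi : ℂ) / 2)) := by
    rw [deriv_fun_mul hGdiff hcder.differentiableAt, hcos0, hcder.deriv, hsinval]
    ring
  -- combine
  have hderiv_eq := hev.deriv_eq
  rw [hcomp.deriv] at hderiv_eq
  rw [hF] at hderiv_eq
  have hζ' : deriv riemannZeta (-(2 * (h : ℂ))) =
      G s₀ * (((-1:ℂ) ^ h) * ((Real.pi : ℂ) / 2)) := by
    linear_combination -hderiv_eq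
  rw [hζ']
  -- evaluate G s₀
  have hGamma : Complex.Gamma s₀ = (Nat.factorial (2 * h) : ℂ) := by
    have : s₀ = ((2 * h : ℕ) : ℂ) + 1 := by rw [hs₀]; push_cast; ring
    rw [this, Complex.Gamma_nat_eq_factorial]
  have hcpow : (2 * (Real.pi : ℂ)) ^ (-s₀) = ((2 * (Real.pi : ℂ)) ^ (2 * h + 1))⁻¹ := by
    have : s₀ = ((2 * h + 1 : ℕ) : ℂ) := by rw [hs₀]; push_cast; ring
    rw [this, ← Complex.cpow_natCast, ← Complex.cpow_neg]
  simp only [hG, hGamma, hcpow]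
  have hexp : (2 * (Real.pi : ℂ)) ^ (2 * h + 1) =
      2 ^ (2 * h + 1) * ((Real.pi : ℂ) ^ (2 * h) * Real.pi) := by
    rw [mul_pow, pow_succ, pow_succ]
  rw [hexp]
  have h2 : (2:ℂ) ^ (2 * h + 1) ≠ 0 := pow_ne_zero _ two_ne_zero
  have hp : (Real.pi : ℂ) ^ (2 * h) ≠ 0 := pow_ne_zero _ hpi
  field_simp
end
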